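/- arXiv:0911.2802 — 6 statements merged into one kernel-verified Lean document; each statement's English description precedes it below -/
import Mathlib

section
/- Let n ≥ 1 and let w : Fin (2n) → Fin 2 be a balanced binary word, i.e. S_{2n}(w) = 0. For any r with 0 ≤ r ≤ 2n, the rotation of w by r is a Dyck word if and only if S_r(w) = min { S_j(w) : 0 ≤ j ≤ 2n }. -/
/-- The rotation of a word `w : Fin L → A` by `r` positions. -/
def rotate {L : ℕ} {A : Type*} (r : ℕ) (w : Fin L → A) : Fin L → A :=
  fun i => w ⟨((i : ℕ) + r) % L, Nat.mod_lt _ (Nat.lt_of_le_of_lt (Nat.zero_le _) i.isLt)⟩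

/-- The `j`-th prefix sum of a binary word, where letter `0` counts `+1`
and letter `1` counts `-1`. -/
def prefixSum {L : ℕ} (w : Fin L → Fin 2) (j : ℕ) : ℤ :=
  ∑ i ∈ Finset.range j, if h : i < L then (if w ⟨i, h⟩ = 0 then 1 else -1) else 0

lemma prefixSum_succ {L : ℕ} (w : Fin L → Fin 2) (j : ℕ) (h : j < L) :
    prefixSum w (j + 1) = prefixSum w j + (if w ⟨j, h⟩ = 0 then 1 else -1) := by
  unfold prefixSum
  rw [Finset.sum_range_succ, dif_pos h]

lemma rotate_apply {L : ℕ} (r : ℕ) (w : Fin L → Fin 2) (i : Fin L) (k : ℕ) (hk : k < L)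
    (h : ((i : ℕ) + r) % L = k) : rotate r w i = w ⟨k, hk⟩ := by
  subst h; rfl

set_option maxHeartbeats 1600000 in
lemma rot_prefix (n : ℕ) (hn : 1 ≤ n) (w : Fin (2 * n) → Fin 2)
    (hbal : prefixSum w (2 * n) = 0) (r : ℕ) (hr : r ≤ 2 * n) :
    ∀ j ≤ 2 * n, prefixSum (rotate r w) j =
      (if r + j ≤ 2 * n then prefixSum w (r + j) else prefixSum w (r + j - 2 * n))
        - prefixSum w r := by
  intro j hj
  induction j with
  | zero =>
    simp only [prefixSum, Finset.range_zero, Finset.sum_empty, Nat.add_zero, if_pos hr]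
    ring
  | succ j ih =>
    have hj' : j ≤ 2 * n := by omega
    have hjlt : j < 2 * n := by omega
    rw [prefixSum_succ (rotate r w) j hjlt, ih hj',
      show r + (j + 1) = r + j + 1 from by omega]
    by_cases h1 : r + j + 1 ≤ 2 * n
    · have hmod : (j + r) % (2 * n) = j + r := Nat.mod_eq_of_lt (by omega)
      have hstep : prefixSum w (r + j + 1) = prefixSum w (r + j) +
          (if w ⟨r + j, by omega⟩ = 0 then 1 else -1) := prefixSum_succ w (r + j) (by omega)
      have hrot : rotate r w ⟨j, hjlt⟩ = w ⟨r + j, by omega⟩ :=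
        rotate_apply r w _ _ (by omega) (by rw [hmod]; omega)
      rw [if_pos (by omega : r + j ≤ 2 * n), if_pos h1, hstep, hrot]; ring
    · by_cases h2 : r + j = 2 * n
      · have hmod : (j + r) % (2 * n) = 0 := by
          have : j + r = 2 * n := by omega
          simp [this]
        have hrot : rotate r w ⟨j, hjlt⟩ = w ⟨0, by omega⟩ :=
          rotate_apply r w _ _ (by omega) hmod
        rw [if_pos (by omega : r + j ≤ 2 * n), if_neg h1, h2,
          show 2 * n + 1 - 2 * n = 1 from by omega, hbal, hrot]
        have hstep : prefixSum w 1 = prefixSum w 0 +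
            (if w ⟨0, by omega⟩ = 0 then 1 else -1) := prefixSum_succ w 0 (by omega)
        have h0 : prefixSum w 0 = 0 := by simp [prefixSum]
        rw [hstep, h0]; ring
      · have hgt : 2 * n < r + j := by omega
        have hmod : (j + r) % (2 * n) = j + r - 2 * n := by
          rw [Nat.mod_eq_sub_mod (by omega)]
          exact Nat.mod_eq_of_lt (by omega)
        have hrot : rotate r w ⟨j, hjlt⟩ = w ⟨r + j - 2 * n, by omega⟩ :=
          rotate_apply r w _ _ (by omega) (by rw [hmod]; omega)
        rw [if_neg (by omega), if_neg h1, hrot]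
        have hstep : prefixSum w (r + j + 1 - 2 * n) = prefixSum w (r + j - 2 * n) +
            (if w ⟨r + j - 2 * n, by omega⟩ = 0 then 1 else -1) := by
          have he : r + j + 1 - 2 * n = (r + j - 2 * n) + 1 := by omega
          rw [he]
          exact prefixSum_succ w (r + j - 2 * n) (by omega)
        rw [hstep]; ring

/-- For a balanced binary word `w` of length `2n`, the rotation of `w` by `r` is a Dyck word
(all prefix sums nonnegative) iff `S_r(w)` is the minimum of the prefix sums of `w`. -/
theorem rotation_isDyck_iff_min
    (n : ℕ) (hn : 1 ≤ n) (w : Fin (2 * n) → Fin 2)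
    (hbal : prefixSum w (2 * n) = 0)
    (r : ℕ) (hr : r ≤ 2 * n) :
    (∀ j ≤ 2 * n, 0 ≤ prefixSum (rotate r w) j) ↔
      prefixSum w r =
        (Finset.range (2 * n + 1)).inf'
          (Finset.nonempty_range_iff.mpr (by omega)) (fun j => prefixSum w j) := by
  have key := rot_prefix n hn w hbal r hr
  have h0 : prefixSum w 0 = 0 := by simp [prefixSum]
  constructor
  · intro hdyck
    apply le_antisymm
    · apply Finset.le_inf'
      intro k hk
      rw [Finset.mem_range] at hk
      have hk' : k ≤ 2 * n := by omega
      by_cases hkr : r ≤ k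
      · have := hdyck (k - r) (by omega)
        rw [key (k - r) (by omega), if_pos (by omega)] at this
        have he : r + (k - r) = k := by omega
        rw [he] at this; linarith
      · rcases Nat.eq_zero_or_pos k with hk0 | hk0
        · subst hk0
          have := hdyck (2 * n - r) (by omega)
          rw [key (2 * n - r) (by omega), if_pos (by omega)] at this
          have he : r + (2 * n - r) = 2 * n := by omega
          rw [he, hbal] at this
          rw [h0]; linarith
        · have := hdyck (k + 2 * n - r) (by omega)
          rw [key (k + 2 * n - r) (by omega), if_neg (by omega)] at this
          have he : r + (k + 2 * n - r) - 2 * n = k := by omega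
          rw [he] at this; linarith
    · exact Finset.inf'_le _ (Finset.mem_range.mpr (by omega))
  · intro hmin j hj
    rw [key j hj]
    have hle : ∀ k ≤ 2 * n, prefixSum w r ≤ prefixSum w k := by
      intro k hk
      rw [hmin]
      exact Finset.inf'_le _ (Finset.mem_range.mpr (by omega))
    by_cases h1 : r + j ≤ 2 * n
    · rw [if_pos h1]; linarith [hle (r + j) (by omega)]
    · rw [if_neg h1]; linarith [hle (r + j - 2 * n) (by omega)]
end

section
/- Let n ≥ 1. Consider on binary words of length 2n the rotation-equivalence relation (two words are equivalent iff one is a rotation of the other). The map sending a Dyck word of length 2n to its rotation-equivalence class of balanced words induces a bijection between the quotient of the set of Dyck words of length 2n by (the restriction of) rotation-equivalence and the set of rotation-equivalence classes of balanced binary words of length 2n. (Raney's lemma: (1,1)-balanced necklaces correspond to cycles of indecomposable Dyck paths.) -/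
/-- Rotation-equivalence of words: `w'` is a rotation of `w`. -/
def rotEquiv {L : ℕ} {A : Type*} (w w' : Fin L → A) : Prop :=
  ∃ r : ℕ, w' = rotate r w

/-- `w` is balanced: its total sum of `±1` steps is zero. -/
def isBalanced {L : ℕ} (w : Fin L → Fin 2) : Prop :=
  prefixSum w L = 0

/-- `w` is a Dyck word: it is balanced and all its prefix sums are nonnegative. -/
def isDyck {L : ℕ} (w : Fin L → Fin 2) : Prop :=
  isBalanced w ∧ ∀ j ≤ L, 0 ≤ prefixSum w j

section Rot
variable {L : ℕ} {A : Type*}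

lemma rotate_zero (w : Fin L → A) : rotate 0 w = w := by
  funext i
  simp [rotate, Nat.mod_eq_of_lt i.isLt]

lemma rotate_rotate (r s : ℕ) (w : Fin L → A) :
    rotate s (rotate r w) = rotate (r + s) w := by
  funext i
  simp only [rotate]
  congr 1
  apply Fin.ext
  show (((i : ℕ) + s) % L + r) % L = ((i : ℕ) + (r + s)) % L
  rw [Nat.mod_add_mod]
  congr 1
  omega

lemma rotate_inv (hL : 0 < L) (r : ℕ) (w : Fin L → A) :
    rotate (L - r % L) (rotate r w) = w := by
  rw [rotate_rotate]
  funext i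
  simp only [rotate]
  congr 1
  apply Fin.ext
  show ((i : ℕ) + (r + (L - r % L))) % L = i
  have h1 : L * (r / L) + r % L = r := Nat.div_add_mod r L
  have h2 : r % L < L := Nat.mod_lt _ hL
  have h3 : r + (L - r % L) = L * (r / L) + L := by omega
  rw [h3, ← Nat.add_assoc, Nat.add_mod_right, Nat.add_mul_mod_self_left,
    Nat.mod_eq_of_lt i.isLt]

lemma rotEquiv_equivalence (hL : 0 < L) : Equivalence (@rotEquiv L A) := by
  constructor
  · intro w; exact ⟨0, (rotate_zero w).symm⟩
  · rintro w w' ⟨r, rfl⟩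
    exact ⟨L - r % L, (rotate_inv hL r w).symm⟩
  · rintro w w' w'' ⟨r, rfl⟩ ⟨s, rfl⟩
    exact ⟨r + s, rotate_rotate r s w⟩

end Rot

section PS
variable {L : ℕ}

/-- Periodic extension of the ±1 values of `w`. -/
def pval {L : ℕ} (w : Fin L → Fin 2) (i : ℕ) : ℤ :=
  if h : i % L < L then (if w ⟨i % L, h⟩ = 0 then 1 else -1) else 0

/-- Window sum of length `b` starting at `a`. -/
def wsum {L : ℕ} (w : Fin L → Fin 2) (a b : ℕ) : ℤ :=
  ∑ i ∈ Finset.range b, pval w (a + i)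

lemma pval_add_period (w : Fin L → Fin 2) (i : ℕ) : pval w (i + L) = pval w i := by
  simp [pval, Nat.add_mod_right]

lemma prefixSum_eq (w : Fin L → Fin 2) {j : ℕ} (hj : j ≤ L) :
    prefixSum w j = wsum w 0 j := by
  refine Finset.sum_congr rfl fun i hi => ?_
  have hi' : i < L := lt_of_lt_of_le (Finset.mem_range.mp hi) hj
  simp [pval, hi', Nat.mod_eq_of_lt hi']

lemma prefixSum_rotate (w : Fin L → Fin 2) (r : ℕ) {j : ℕ} (hj : j ≤ L) :
    prefixSum (rotate r w) j = wsum w r j := by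
  refine Finset.sum_congr rfl fun i hi => ?_
  have hi' : i < L := lt_of_lt_of_le (Finset.mem_range.mp hi) hj
  have hL : 0 < L := lt_of_le_of_lt (Nat.zero_le _) hi'
  rw [dif_pos hi']
  show (if (rotate r w) ⟨i, hi'⟩ = 0 then (1:ℤ) else -1) = pval w (r + i)
  simp only [pval]
  rw [dif_pos (Nat.mod_lt _ hL)]
  have heq : (rotate r w) ⟨i, hi'⟩ = w ⟨(r + i) % L, Nat.mod_lt _ hL⟩ := by
    show w _ = w _
    congr 1
    exact Fin.ext (by simp [Nat.add_comm])
  rw [heq]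

lemma wsum_add (w : Fin L → Fin 2) (a b c : ℕ) :
    wsum w a (b + c) = wsum w a b + wsum w (a + b) c := by
  rw [wsum, Finset.sum_range_add]
  congr 1
  refine Finset.sum_congr rfl fun i _ => ?_
  congr 1
  omega

lemma wsum_period (w : Fin L → Fin 2) (a : ℕ) : wsum w a L = wsum w 0 L := by
  induction a with
  | zero => rfl
  | succ a ih =>
    rw [← ih]
    have h1 : wsum w a (L + 1) = wsum w a L + pval w (a + L) := by
      rw [wsum, Finset.sum_range_succ]; rfl
    have h2 : wsum w a (L + 1) = wsum w (a + 1) L + pval w a := by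
      rw [wsum, Finset.sum_range_succ']
      simp only [Nat.add_zero]
      congr 1
      refine Finset.sum_congr rfl fun i _ => ?_
      congr 1
      omega
    have h3 : pval w (a + L) = pval w a := pval_add_period w a
    linarith [h1, h2, h3]

lemma wsum_mod (w : Fin L → Fin 2) (hb : wsum w 0 L = 0) (m : ℕ) :
    wsum w 0 m = wsum w 0 (m % L) := by
  have hL : 0 < L ∨ L = 0 := by omega
  rcases hL with hL | rfl
  · induction m using Nat.strong_induction_on with
    | _ m ih =>
      by_cases h : m < L
      · rw [Nat.mod_eq_of_lt h]
      · push_neg at h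
        have hm : m = (m - L) + L := by omega
        rw [hm, wsum_add, Nat.zero_add, wsum_period, hb, add_zero,
          ih (m - L) (by omega), Nat.add_mod_right]
  · simp

lemma exists_dyck_rotation (hL : 0 < L) (w : Fin L → Fin 2) (hw : isBalanced w) :
    ∃ r, isDyck (rotate r w) := by
  have hbal : wsum w 0 L = 0 := by rw [← prefixSum_eq w le_rfl]; exact hw
  obtain ⟨r, hr, hmin⟩ := Finset.exists_min_image (Finset.range L) (wsum w 0)
    ⟨0, Finset.mem_range.mpr hL⟩
  refine ⟨r, ?_, ?_⟩
  · show prefixSum (rotate r w) L = 0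
    rw [prefixSum_rotate w r le_rfl, wsum_period, hbal]
  · intro j hj
    rw [prefixSum_rotate w r hj]
    have h1 : wsum w 0 (r + j) = wsum w 0 r + wsum w r j := by
      have := wsum_add w 0 r j
      simpa using this
    have h2 : wsum w 0 (r + j) = wsum w 0 ((r + j) % L) := wsum_mod w hbal _
    have h3 : wsum w 0 r ≤ wsum w 0 ((r + j) % L) :=
      hmin _ (Finset.mem_range.mpr (Nat.mod_lt _ hL))
    omega

end PS

/-- Raney's lemma: the map sending a Dyck word of length `2n` to its rotation-equivalence
class of balanced words induces a bijection between the quotient of Dyck words by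
(the restriction of) rotation-equivalence and the set of rotation-equivalence classes of
balanced binary words of length `2n`. -/
theorem raney_bijection (n : ℕ) (hn : 1 ≤ n) :
    ∃ e : Quot (fun d d' : {w : Fin (2 * n) → Fin 2 // isDyck w} => rotEquiv d.1 d'.1) ≃
          Quot (fun b b' : {w : Fin (2 * n) → Fin 2 // isBalanced w} => rotEquiv b.1 b'.1),
      ∀ d : {w : Fin (2 * n) → Fin 2 // isDyck w},
        e (Quot.mk _ d) = Quot.mk _ ⟨d.1, d.2.1⟩ := by
  have hL : 0 < 2 * n := by omega
  set rd := fun d d' : {w : Fin (2 * n) → Fin 2 // isDyck w} => rotEquiv d.1 d'.1 with hrd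
  set rb := fun b b' : {w : Fin (2 * n) → Fin 2 // isBalanced w} => rotEquiv b.1 b'.1 with hrb
  have hrbe : Equivalence rb := by
    constructor
    · intro b; exact (rotEquiv_equivalence hL).refl b.1
    · intro b b' h; exact (rotEquiv_equivalence hL).symm h
    · intro a b c h h'; exact (rotEquiv_equivalence hL).trans h h'
  let f : Quot rd → Quot rb :=
    Quot.lift (fun d => Quot.mk rb ⟨d.1, d.2.1⟩)
      (fun d d' h => Quot.sound h)
  have hinj : Function.Injective f := by
    intro x y
    induction x using Quot.ind with | _ d =>
    induction y using Quot.ind with | _ d' =>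
    intro h
    have h' : Quot.mk rb ⟨d.1, d.2.1⟩ = Quot.mk rb ⟨d'.1, d'.2.1⟩ := h
    have h2 : rb ⟨d.1, d.2.1⟩ ⟨d'.1, d'.2.1⟩ :=
      (Equivalence.eqvGen_iff hrbe).mp (Quot.eqvGen_exact h')
    exact Quot.sound h2
  have hsurj : Function.Surjective f := by
    intro y
    induction y using Quot.ind with | _ b =>
    obtain ⟨r, hdy⟩ := exists_dyck_rotation hL b.1 b.2
    refine ⟨Quot.mk rd ⟨rotate r b.1, hdy⟩, ?_⟩
    show Quot.mk rb ⟨rotate r b.1, hdy.1⟩ = Quot.mk rb b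
    refine Quot.sound ?_
    exact (rotEquiv_equivalence hL).symm ⟨r, rfl⟩
  exact ⟨Equiv.ofBijective f ⟨hinj, hsurj⟩, fun d => rfl⟩
end

section
/- Let m ≥ 1 and let N_m denote the number of rotation-equivalence classes of binary words of length 2m having exactly m letters of each kind ((1,1)-balanced necklaces of length 2m). Then 2m · N_m = Σ_{d ∣ m} φ(d) · binomial(2m/d, m/d). -/
namespace Neck

variable {L : ℕ} {A : Type*}

theorem rotate_zero (w : Fin L → A) : rotate 0 w = w := by
  funext i; simp [rotate, Nat.mod_eq_of_lt i.isLt]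

theorem rotate_rotate (a b : ℕ) (w : Fin L → A) :
    rotate a (rotate b w) = rotate (a + b) w := by
  funext i; simp only [rotate]; congr 1; ext; simp [Nat.mod_add_mod, Nat.add_assoc]

theorem rotate_congr {a b : ℕ} (h : a ≡ b [MOD L]) (w : Fin L → A) :
    rotate a w = rotate b w := by
  funext i; simp only [rotate]; congr 1; ext; exact Nat.ModEq.add_left _ h

theorem rotate_mul {r : ℕ} {w : Fin L → A} (h : rotate r w = w) (k : ℕ) :
    rotate (k * r) w = w := by
  induction k with
  | zero => simpa using rotate_zero w
  | succ k ih =>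
    have : rotate ((k + 1) * r) w = rotate (k * r) (rotate r w) := by
      rw [rotate_rotate]; ring_nf
    rw [this, h, ih]

/-- The shift map as a bijection. -/
theorem shift_inj (r : ℕ) : Function.Injective
    (fun i : Fin L => (⟨((i : ℕ) + r) % L, Nat.mod_lt _ (Nat.lt_of_le_of_lt (Nat.zero_le _) i.isLt)⟩ : Fin L)) := by
  intro i j h
  simp only [Fin.mk.injEq] at h
  have : (i : ℕ) ≡ j [MOD L] := Nat.ModEq.add_right_cancel' r h
  exact Fin.ext ((Nat.mod_eq_of_lt i.isLt).symm.trans ((this.trans (Nat.ModEq.refl _))) |>.trans (Nat.mod_eq_of_lt j.isLt))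

theorem card_filter_rotate [DecidableEq A] (r : ℕ) (w : Fin L → A) (a : A) :
    (Finset.univ.filter fun j => rotate r w j = a).card
      = (Finset.univ.filter fun j => w j = a).card := by
  classical
  have hbij := (Finite.injective_iff_bijective).mp (shift_inj (L := L) r)
  rw [← Fintype.card_subtype, ← Fintype.card_subtype]
  exact Fintype.card_congr ((Equiv.ofBijective _ hbij).subtypeEquiv fun i => Iff.rfl)


theorem rotate_eq_self_iff_gcd (hL : 0 < L) (r : ℕ) (w : Fin L → A) :
    rotate r w = w ↔ rotate (Nat.gcd r L) w = w := by
  constructor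
  · intro h
    rcases eq_or_lt_of_le (Nat.le_of_dvd hL (Nat.gcd_dvd_right r L)) with heq | hlt
    · rw [heq, rotate_congr (Nat.modEq_zero_iff_dvd.mpr dvd_rfl) w, rotate_zero]
    · obtain ⟨u, -, hu⟩ := Nat.exists_mul_mod_eq_gcd hlt
      calc rotate (Nat.gcd r L) w = rotate (r * u % L) w := by rw [hu]
        _ = rotate (r * u) w := rotate_congr (Nat.mod_modEq _ _) w
        _ = rotate (u * r) w := by rw [Nat.mul_comm]
        _ = w := rotate_mul h u
  · intro h
    obtain ⟨t, ht⟩ := Nat.gcd_dvd_left r L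
    rw [ht, Nat.mul_comm]
    exact rotate_mul h t

variable {d : ℕ} [NeZero d]

def blockify (b : Fin d → A) : Fin L → A :=
  fun j => b ⟨(j : ℕ) % d, Nat.mod_lt _ (Nat.pos_of_ne_zero (NeZero.ne d))⟩

theorem rotate_blockify (hdvd : d ∣ L) (b : Fin d → A) :
    rotate d (blockify b : Fin L → A) = blockify b := by
  funext j
  simp only [rotate, blockify]
  congr 1
  ext
  simp only
  rw [Nat.mod_mod_of_dvd _ hdvd, Nat.add_mod_right]

theorem periodic_eq (hdvd : d ∣ L) {w : Fin L → A} (h : rotate d w = w) (j : Fin L) :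
    w j = w ⟨(j : ℕ) % d,
      lt_of_lt_of_le (Nat.mod_lt _ (Nat.pos_of_ne_zero (NeZero.ne d))) (Nat.le_of_dvd j.pos hdvd)⟩ := by
  have h2 := congrFun (rotate_mul h ((j : ℕ) / d)) ⟨(j : ℕ) % d,
      lt_of_lt_of_le (Nat.mod_lt _ (Nat.pos_of_ne_zero (NeZero.ne d))) (Nat.le_of_dvd j.pos hdvd)⟩
  simp only [rotate, Nat.mod_add_div', Nat.mod_eq_of_lt j.isLt] at h2
  rw [← h2]

def periodEquiv (hL : 0 < L) (hdvd : d ∣ L) :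
    {w : Fin L → A // rotate d w = w} ≃ (Fin d → A) where
  toFun w := fun i => w.1 ⟨i, lt_of_lt_of_le i.isLt (Nat.le_of_dvd hL hdvd)⟩
  invFun b := ⟨blockify b, rotate_blockify hdvd b⟩
  left_inv w := by
    apply Subtype.ext
    funext j
    exact (periodic_eq hdvd w.2 j).symm
  right_inv b := by
    funext i
    simp only [blockify]
    congr 1
    exact Fin.ext (by simp [Nat.mod_eq_of_lt i.isLt])

theorem card_filter_blockify [DecidableEq A] (hdvd : d ∣ L) (b : Fin d → A) (a : A) :
    (Finset.univ.filter fun j : Fin L => blockify b j = a).card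
      = (L / d) * (Finset.univ.filter fun i => b i = a).card := by
  classical
  have hd : 0 < d := Nat.pos_of_ne_zero (NeZero.ne d)
  have key : {j : Fin L // blockify b j = a} ≃ Fin (L / d) × {i : Fin d // b i = a} :=
    { toFun := fun j => (⟨(j.1 : ℕ) / d, Nat.div_lt_div_of_lt_of_dvd hdvd j.1.isLt⟩,
        ⟨⟨(j.1 : ℕ) % d, Nat.mod_lt _ hd⟩, j.2⟩)
      invFun := fun p => ⟨⟨(p.2.1 : ℕ) + d * (p.1 : ℕ), by
          calc (p.2.1 : ℕ) + d * (p.1 : ℕ) < d + d * (p.1 : ℕ) := by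
                exact Nat.add_lt_add_right p.2.1.isLt _
            _ = d * ((p.1 : ℕ) + 1) := by ring
            _ ≤ d * (L / d) := Nat.mul_le_mul_left d p.1.isLt
            _ = L := Nat.mul_div_cancel' hdvd⟩, by
          simp only [blockify]
          have : ((p.2.1 : ℕ) + d * (p.1 : ℕ)) % d = (p.2.1 : ℕ) :=
            by rw [Nat.add_mul_mod_self_left, Nat.mod_eq_of_lt p.2.1.isLt]
          rw [show (⟨((p.2.1 : ℕ) + d * (p.1 : ℕ)) % d, _⟩ : Fin d) = p.2.1 from Fin.ext this]
          exact p.2.2⟩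
      left_inv := fun j => by
        apply Subtype.ext
        apply Fin.ext
        simp only
        rw [Nat.add_comm, Nat.div_add_mod]
      right_inv := fun p => by
        refine Prod.ext (Fin.ext ?_) (Subtype.ext (Fin.ext ?_)) <;> simp only
        · rw [Nat.add_mul_div_left _ _ hd, Nat.div_eq_of_lt p.2.1.isLt, Nat.zero_add]
        · rw [Nat.add_mul_mod_self_left, Nat.mod_eq_of_lt p.2.1.isLt] }
  rw [← Fintype.card_subtype, ← Fintype.card_subtype]
  rw [Fintype.card_congr key, Fintype.card_prod, Fintype.card_fin]


theorem filter_card_add {n : ℕ} (b : Fin n → Fin 2) :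
    (Finset.univ.filter fun j => b j = 0).card + (Finset.univ.filter fun j => b j = 1).card = n := by
  classical
  have h := Finset.card_filter_add_card_filter_not (s := Finset.univ)
    (p := fun j => b j = 0)
  have h2 : ∀ x : Fin 2, (¬ x = 0) ↔ x = 1 := by decide
  simp only [h2] at h
  simpa using h

theorem card_balanced (e : ℕ) :
    Fintype.card {b : Fin (2 * e) → Fin 2 //
        ∀ a : Fin 2, (Finset.univ.filter fun j => b j = a).card = e}
      = Nat.choose (2 * e) e := by
  classical
  have key : {b : Fin (2 * e) → Fin 2 //
        ∀ a : Fin 2, (Finset.univ.filter fun j => b j = a).card = e}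
      ≃ {s : Finset (Fin (2 * e)) // s.card = e} :=
    { toFun := fun b => ⟨Finset.univ.filter fun j => b.1 j = 1, b.2 1⟩
      invFun := fun s => ⟨fun j => if j ∈ s.1 then 1 else 0, by
        have h1 : (Finset.univ.filter fun j =>
            (if j ∈ s.1 then (1 : Fin 2) else 0) = 1) = s.1 := by
          ext j
          by_cases h : j ∈ s.1 <;> simp [h]
        intro a
        match a with
        | 0 =>
          have hsum : (Finset.univ.filter fun j =>
                (if j ∈ s.1 then (1 : Fin 2) else 0) = 0).card
              + (Finset.univ.filter fun j =>
                (if j ∈ s.1 then (1 : Fin 2) else 0) = 1).card = 2 * e :=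
            filter_card_add _
          rw [h1, s.2] at hsum
          beta_reduce
          omega
        | 1 => rw [h1, s.2]⟩
      left_inv := fun b => by
        apply Subtype.ext
        funext j
        have : ∀ x : Fin 2, (if x = 1 then (1 : Fin 2) else 0) = x := by decide
        simp only [Finset.mem_filter, Finset.mem_univ, true_and]
        exact this (b.1 j)
      right_inv := fun s => by
        apply Subtype.ext
        ext j
        by_cases h : j ∈ s.1 <;> simp [h] }
  rw [Fintype.card_congr key, Fintype.card_finset_len, Fintype.card_fin]

theorem card_fixed (m : ℕ) (hm : 1 ≤ m) (r : ℕ) :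
    Fintype.card {w : {w : Fin (2 * m) → Fin 2 //
        ∀ a : Fin 2, (Finset.univ.filter (fun j => w j = a)).card = m} // rotate r w.1 = w.1}
      = if 2 ∣ Nat.gcd r (2 * m) then
          (Nat.gcd r (2 * m)).choose (Nat.gcd r (2 * m) / 2) else 0 := by
  classical
  have hL : 0 < 2 * m := by omega
  set g := Nat.gcd r (2 * m) with hg
  have hdvd : g ∣ 2 * m := Nat.gcd_dvd_right r (2 * m)
  have hgpos : 0 < g := Nat.gcd_pos_of_pos_right r hL
  haveI : NeZero g := ⟨hgpos.ne'⟩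
  have eA : {w : {w : Fin (2 * m) → Fin 2 //
        ∀ a : Fin 2, (Finset.univ.filter (fun j => w j = a)).card = m} // rotate r w.1 = w.1}
      ≃ {w : Fin (2 * m) → Fin 2 //
          (∀ a : Fin 2, (Finset.univ.filter (fun j => w j = a)).card = m) ∧ rotate r w = w} :=
    Equiv.subtypeSubtypeEquivSubtypeInter
      (fun w : Fin (2 * m) → Fin 2 => ∀ a : Fin 2, (Finset.univ.filter (fun j => w j = a)).card = m)
      (fun w => rotate r w = w)
  have eB : {w : Fin (2 * m) → Fin 2 //
          (∀ a : Fin 2, (Finset.univ.filter (fun j => w j = a)).card = m) ∧ rotate r w = w}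
      ≃ {w : Fin (2 * m) → Fin 2 //
          rotate g w = w ∧ ∀ a : Fin 2, (Finset.univ.filter (fun j => w j = a)).card = m} :=
    Equiv.subtypeEquivRight fun w => by
      rw [rotate_eq_self_iff_gcd hL r w]; exact and_comm
  have eC : {w : Fin (2 * m) → Fin 2 //
          rotate g w = w ∧ ∀ a : Fin 2, (Finset.univ.filter (fun j => w j = a)).card = m}
      ≃ {w : {w : Fin (2 * m) → Fin 2 // rotate g w = w} //
          ∀ a : Fin 2, (Finset.univ.filter (fun j => w.1 j = a)).card = m} :=
    (Equiv.subtypeSubtypeEquivSubtypeInter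
      (fun w : Fin (2 * m) → Fin 2 => rotate g w = w)
      (fun w => ∀ a : Fin 2, (Finset.univ.filter (fun j => w j = a)).card = m)).symm
  have eD : {w : {w : Fin (2 * m) → Fin 2 // rotate g w = w} //
          ∀ a : Fin 2, (Finset.univ.filter (fun j => w.1 j = a)).card = m}
      ≃ {b : Fin g → Fin 2 //
          ∀ a : Fin 2, (2 * m / g) * (Finset.univ.filter fun i => b i = a).card = m} := by
    refine (periodEquiv hL hdvd).subtypeEquiv fun w => ?_
    have hw : w.1 = blockify (L := 2 * m) (periodEquiv hL hdvd w) := by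
      have := congrArg Subtype.val ((periodEquiv (A := Fin 2) hL hdvd).left_inv w)
      exact this.symm
    constructor
    · intro h a
      rw [← card_filter_blockify hdvd (periodEquiv hL hdvd w) a]
      simp only [← hw]
      exact h a
    · intro h a
      simp only [hw]
      rw [card_filter_blockify hdvd (periodEquiv hL hdvd w) a]
      exact h a
  have e1 := ((eA.trans eB).trans eC).trans eD
  rw [Fintype.card_congr e1]
  by_cases hpar : 2 ∣ g
  · rw [if_pos hpar]
    obtain ⟨e, he⟩ := hpar
    have hem : e ∣ m := by
      have : 2 * e ∣ 2 * m := he ▸ hdvd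
      exact (mul_dvd_mul_iff_left (two_ne_zero)).mp this
    have hepos : 0 < e := by
      rcases Nat.eq_zero_or_pos e with h0 | h; · omega
      exact h
    have hk : 2 * m / g = m / e := by rw [he, Nat.mul_div_mul_left _ _ (by norm_num)]
    have hkpos : 0 < m / e := Nat.div_pos (Nat.le_of_dvd (by omega) hem) hepos
    have hke : (m / e) * e = m := Nat.div_mul_cancel hem
    have e2 : {b : Fin g → Fin 2 //
          ∀ a : Fin 2, (2 * m / g) * (Finset.univ.filter fun i => b i = a).card = m}
        ≃ {b : Fin g → Fin 2 //
          ∀ a : Fin 2, (Finset.univ.filter fun i => b i = a).card = e} := by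
      refine Equiv.subtypeEquivRight fun b => ?_
      rw [hk]
      constructor
      · intro h a
        exact Nat.eq_of_mul_eq_mul_left hkpos ((h a).trans hke.symm)
      · intro h a
        rw [h a]
        exact hke
    rw [Fintype.card_congr e2]
    have hg2 : g / 2 = e := by omega
    rw [hg2, he]
    exact card_balanced e
  · rw [if_neg hpar]
    rw [Fintype.card_eq_zero_iff]
    constructor
    rintro ⟨b, hb⟩
    have hsum := filter_card_add b
    have h0 := hb 0
    have h1 := hb 1
    have hkpos : 0 < 2 * m / g := Nat.div_pos (Nat.le_of_dvd hL hdvd) hgpos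
    have hc : (Finset.univ.filter fun i => b i = 0).card
        = (Finset.univ.filter fun i => b i = 1).card :=
      Nat.eq_of_mul_eq_mul_left hkpos (h0.trans h1.symm)
    exact hpar ⟨(Finset.univ.filter fun i => b i = 0).card, by omega⟩


theorem card_gcd_fiber {L g : ℕ} (hL : 0 < L) (hgL : g ∣ L) (hgpos : 0 < g) :
    ((Finset.range L).filter fun r => Nat.gcd r L = g).card = Nat.totient (L / g) := by
  rw [Nat.totient_eq_card_coprime]
  apply Finset.card_nbij' (i := fun r => r / g) (j := fun s => g * s)
  · intro r hr
    simp only [Finset.mem_coe, Finset.mem_filter, Finset.mem_range] at hr ⊢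
    refine ⟨Nat.div_lt_div_of_lt_of_dvd hgL hr.1, ?_⟩
    have := Nat.coprime_div_gcd_div_gcd (m := r) (n := L) (hr.2 ▸ hgpos)
    rw [hr.2] at this
    exact this.symm
  · intro s hs
    simp only [Finset.mem_coe, Finset.mem_filter, Finset.mem_range] at hs ⊢
    constructor
    · calc g * s < g * (L / g) := mul_lt_mul_of_pos_left hs.1 hgpos
        _ = L := Nat.mul_div_cancel' hgL
    · conv_lhs => rw [show L = g * (L / g) from (Nat.mul_div_cancel' hgL).symm]
      rw [Nat.gcd_mul_left, Nat.Coprime.gcd_eq_one hs.2.symm, Nat.mul_one]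
  · intro r hr
    simp only [Finset.mem_coe, Finset.mem_filter, Finset.mem_range] at hr
    exact Nat.mul_div_cancel' (hr.2 ▸ Nat.gcd_dvd_left r L)
  · intro s _
    exact Nat.mul_div_cancel_left s hgpos

theorem sum_gcd_eq (L : ℕ) (hL : 0 < L) (F : ℕ → ℕ) :
    (∑ r ∈ Finset.range L, F (Nat.gcd r L))
      = ∑ g ∈ L.divisors, Nat.totient (L / g) * F g := by
  rw [← Finset.sum_fiberwise_of_maps_to (g := fun r => Nat.gcd r L) (t := L.divisors)
    (fun r _ => Nat.mem_divisors.mpr ⟨Nat.gcd_dvd_right r L, hL.ne'⟩)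
    (fun r => F (Nat.gcd r L))]
  apply Finset.sum_congr rfl
  intro g hg
  rw [Nat.mem_divisors] at hg
  have hgpos : 0 < g := by
    rcases Nat.eq_zero_or_pos g with h0 | h
    · exfalso; apply hg.2; simpa [h0] using hg.1
    · exact h
  rw [Finset.sum_congr rfl (fun r hr => by
    rw [(Finset.mem_filter.mp hr).2])]
  rw [Finset.sum_const, card_gcd_fiber hL hg.1 hgpos, smul_eq_mul]

theorem sum_divisors_shift (m : ℕ) (hm : 1 ≤ m) :
    (∑ g ∈ (2 * m).divisors,
        Nat.totient (2 * m / g) * (if 2 ∣ g then g.choose (g / 2) else 0))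
      = ∑ d ∈ m.divisors, Nat.totient d * Nat.choose (2 * m / d) (m / d) := by
  have h1 : (∑ g ∈ (2 * m).divisors,
        Nat.totient (2 * m / g) * (if 2 ∣ g then g.choose (g / 2) else 0))
      = ∑ e ∈ m.divisors, Nat.totient (m / e) * (2 * e).choose e := by
    rw [← Finset.sum_subset (s₁ := m.divisors.image (fun e => 2 * e))
      (h := by
        intro g hg
        obtain ⟨e, he, rfl⟩ := Finset.mem_image.mp hg
        rw [Nat.mem_divisors] at he ⊢
        exact ⟨mul_dvd_mul_left 2 he.1, by omega⟩)
      (hf := by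
        intro g hg hgn
        rw [Nat.mem_divisors] at hg
        have : ¬ 2 ∣ g := by
          intro ⟨e, he⟩
          apply hgn
          apply Finset.mem_image.mpr
          refine ⟨e, ?_, he.symm⟩
          rw [Nat.mem_divisors]
          refine ⟨?_, by omega⟩
          have := hg.1
          rw [he] at this
          exact (mul_dvd_mul_iff_left (two_ne_zero)).mp this
        rw [if_neg this, Nat.mul_zero])]
    rw [Finset.sum_image (by intro x _ y _ h; beta_reduce at h; omega)]
    apply Finset.sum_congr rfl
    intro e _
    rw [if_pos ⟨e, rfl⟩, Nat.mul_div_mul_left _ _ (by norm_num),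
      Nat.mul_div_cancel_left _ (by norm_num)]
  rw [h1, ← Nat.sum_div_divisors m (fun e => Nat.totient (m / e) * (2 * e).choose e)]
  apply Finset.sum_congr rfl
  intro d hd
  rw [Nat.mem_divisors] at hd
  rw [Nat.div_div_self hd.1 hd.2, Nat.mul_div_assoc 2 hd.1]

instance necklaceAction (m : ℕ) [NeZero (2 * m)] :
    AddAction (ZMod (2 * m)) {w : Fin (2 * m) → Fin 2 //
      ∀ a : Fin 2, (Finset.univ.filter (fun j => w j = a)).card = m} where
  vadd g w := ⟨rotate (ZMod.val g) w.1, fun a => by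
    rw [card_filter_rotate]; exact w.2 a⟩
  zero_vadd w := Subtype.ext (by
    show rotate (ZMod.val (0 : ZMod (2 * m))) w.1 = w.1
    rw [ZMod.val_zero]; exact rotate_zero w.1)
  add_vadd g h w := Subtype.ext (by
    show rotate (ZMod.val (g + h)) w.1 = rotate (ZMod.val g) (rotate (ZMod.val h) w.1)
    rw [rotate_rotate, ZMod.val_add]
    exact rotate_congr (Nat.mod_modEq _ _) w.1)

theorem vadd_def (m : ℕ) [NeZero (2 * m)] (g : ZMod (2 * m))
    (w : {w : Fin (2 * m) → Fin 2 //
      ∀ a : Fin 2, (Finset.univ.filter (fun j => w j = a)).card = m}) :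
    (g +ᵥ w).1 = rotate (ZMod.val g) w.1 := rfl

end Neck

open Neck in
/-- Counting (1,1)-balanced necklaces: if `N_m` is the number of rotation-equivalence
classes of binary words of length `2m` with exactly `m` letters of each kind, then
`2m · N_m = Σ_{d ∣ m} φ(d) · C(2m/d, m/d)`. -/
theorem count_balanced_necklaces (m : ℕ) (hm : 1 ≤ m) :
    2 * m *
      Nat.card (Quot (fun w w' : {w : Fin (2 * m) → Fin 2 //
          ∀ a : Fin 2, (Finset.univ.filter (fun j => w j = a)).card = m} =>
        rotEquiv w.1 w'.1))
      = ∑ d ∈ m.divisors, Nat.totient d * Nat.choose (2 * m / d) (m / d) := by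
  classical
  haveI : NeZero (2 * m) := ⟨by omega⟩
  set X := {w : Fin (2 * m) → Fin 2 //
      ∀ a : Fin 2, (Finset.univ.filter (fun j => w j = a)).card = m} with hX
  -- identify the quotient with the orbit quotient
  have hrel : (fun w w' : X => rotEquiv w.1 w'.1)
      = (AddAction.orbitRel (ZMod (2 * m)) X).r := by
    funext w w'
    apply propext
    constructor
    · rintro ⟨r, hr⟩
      have hw' : w' = (r : ZMod (2 * m)) +ᵥ w := by
        apply Subtype.ext
        rw [vadd_def, hr]
        exact (rotate_congr (by simpa [ZMod.val_natCast] using (Nat.mod_modEq r (2*m))) w.1).symm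
      refine ⟨-(r : ZMod (2 * m)), ?_⟩
      show (-(r : ZMod (2 * m))) +ᵥ w' = w
      rw [hw', ← add_vadd, neg_add_cancel, zero_vadd]
    · rintro ⟨g, hg⟩
      refine ⟨ZMod.val (-g), ?_⟩
      have : w' = (-g) +ᵥ w := by rw [← hg, ← add_vadd, neg_add_cancel, zero_vadd]
      rw [this, vadd_def]
  have hquot : Quot (fun w w' : X => rotEquiv w.1 w'.1)
      = AddAction.orbitRel.Quotient (ZMod (2 * m)) X := congrArg Quot hrel
  rw [hquot]
  -- Burnside
  haveI : ∀ g : ZMod (2 * m), Fintype (AddAction.fixedBy X g) := fun g => Fintype.ofFinite _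
  haveI : Fintype (AddAction.orbitRel.Quotient (ZMod (2 * m)) X) := Fintype.ofFinite _
  have burnside := AddAction.sum_card_fixedBy_eq_card_orbits_mul_card_addGroup (ZMod (2 * m)) X
  rw [Nat.card_eq_fintype_card]
  have hcardG : Fintype.card (ZMod (2 * m)) = 2 * m := ZMod.card _
  rw [hcardG] at burnside
  rw [Nat.mul_comm, ← burnside]
  -- compute each fixed-point count
  have hfix : ∀ g : ZMod (2 * m), Fintype.card (AddAction.fixedBy X g)
      = if 2 ∣ Nat.gcd (ZMod.val g) (2 * m) then
          (Nat.gcd (ZMod.val g) (2 * m)).choose (Nat.gcd (ZMod.val g) (2 * m) / 2) else 0 := by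
    intro g
    rw [← card_fixed m hm (ZMod.val g)]
    apply Fintype.card_congr
    apply Equiv.subtypeEquivRight
    intro w
    show g +ᵥ w = w ↔ _
    rw [Subtype.ext_iff, vadd_def]
  rw [Finset.sum_congr rfl (fun g _ => hfix g)]
  -- transform sum over ZMod to sum over range
  have hsum : (∑ g : ZMod (2 * m), (fun r => if 2 ∣ Nat.gcd r (2 * m) then
          (Nat.gcd r (2 * m)).choose (Nat.gcd r (2 * m) / 2) else 0) (ZMod.val g))
      = ∑ r ∈ Finset.range (2 * m), (fun r => if 2 ∣ Nat.gcd r (2 * m) then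
          (Nat.gcd r (2 * m)).choose (Nat.gcd r (2 * m) / 2) else 0) r := by
    apply Finset.sum_nbij' (i := fun g => ZMod.val g) (j := fun r => (r : ZMod (2 * m)))
    · intro g _; exact Finset.mem_range.mpr (ZMod.val_lt g)
    · intro r _; exact Finset.mem_univ _
    · intro g _; exact ZMod.natCast_rightInverse g
    · intro r hr; exact ZMod.val_cast_of_lt (Finset.mem_range.mp hr)
    · intro g _; rfl
  rw [hsum]
  beta_reduce
  have h2 := sum_gcd_eq (2 * m) (by omega) (fun gg => if 2 ∣ gg then gg.choose (gg / 2) else 0)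
  beta_reduce at h2
  rw [h2]
  exact sum_divisors_shift m hm
end

section
/- Let k ≥ 1 and let v : Fin k → ℕ satisfy v i ≥ 1 for all i and gcd(v 1, …, v k) = 1; set V = Σ_i v i, and for m ≥ 1 let N_{v,m} be the number of rotation-equivalence classes of words of length V·m over Fin k having exactly v i · m occurrences of each letter i. For every real x with 0 < x < 1 and x^V · V^V < ∏_i (v i)^{v i}, both series below converge and Σ_{m≥1} (V·m) · N_{v,m} · x^{V·m} = Σ_{n≥1} φ(n) · ( Σ_{p≥1} ((V·p)!/∏_i (v i · p)!) · x^{V·n·p} ). (Analytic form of the isomorphism ΘCyc_v ≅ Σ_{n>0} φ(n) Rep_n(Seq_v): C•_v(x) = Σ_{n≥1} φ(n) S⁺_v(x^n).) -/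
set_option maxHeartbeats 1600000

open Finset

namespace RotAux

variable {L : ℕ} {A : Type*}

lemma rotate_zero (w : Fin L → A) : rotate 0 w = w := by
  funext i; simp [rotate, Nat.mod_eq_of_lt i.isLt]

lemma rotate_rotate (r s : ℕ) (w : Fin L → A) :
    rotate r (rotate s w) = rotate (r + s) w := by
  funext i
  simp only [rotate]
  congr 1
  apply Fin.ext
  simp [Nat.mod_add_mod, Nat.add_assoc]

lemma rotate_mod (r : ℕ) (w : Fin L → A) : rotate r w = rotate (r % L) w := by
  funext i
  simp only [rotate]
  congr 1
  apply Fin.ext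
  simp [Nat.add_mod]

lemma rotate_self (w : Fin L → A) : rotate L w = w := by
  rw [rotate_mod, Nat.mod_self, rotate_zero]

lemma fix_add {a b : ℕ} {w : Fin L → A} (ha : rotate a w = w) (hb : rotate b w = w) :
    rotate (a + b) w = w := by
  rw [← rotate_rotate, hb, ha]

lemma fix_mul {a : ℕ} {w : Fin L → A} (ha : rotate a w = w) (q : ℕ) :
    rotate (a * q) w = w := by
  induction q with
  | zero => simpa using rotate_zero w
  | succ n ih => rw [Nat.mul_succ, ← rotate_rotate, ha, ih]

lemma fix_gcd {w : Fin L → A} : ∀ (a b : ℕ), rotate a w = w → rotate b w = w →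
    rotate (Nat.gcd a b) w = w := by
  intro a
  induction a using Nat.strong_induction_on with
  | _ a ih =>
    intro b ha hb
    rcases Nat.eq_zero_or_pos a with rfl | ha0
    · simpa [Nat.gcd_zero_left] using hb
    · rw [Nat.gcd_rec]
      have hmod : rotate (b % a) w = w := by
        have h1 : rotate (b % a + a * (b / a)) w = w := by
          rw [Nat.mod_add_div]; exact hb
        have h2 := fix_mul ha (b / a)
        rw [← rotate_rotate, h2] at h1
        exact h1
      exact ih (b % a) (Nat.mod_lt _ ha0) a hmod ha

/-- rotation as a permutation of `Fin L`. -/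
def rotPerm (L : ℕ) (r : ℕ) : Equiv.Perm (Fin L) where
  toFun i := ⟨((i : ℕ) + r) % L, Nat.mod_lt _ (Nat.lt_of_le_of_lt (Nat.zero_le _) i.isLt)⟩
  invFun i := ⟨((i : ℕ) + (L - r % L)) % L, Nat.mod_lt _ (Nat.lt_of_le_of_lt (Nat.zero_le _) i.isLt)⟩
  left_inv i := by
    apply Fin.ext
    simp only [Nat.mod_add_mod]
    have h1 : (i : ℕ) + r + (L - r % L) = (i : ℕ) + L * (r / L + 1) := by
      have h2 := Nat.mod_add_div r L
      have h3 : r % L ≤ L := le_of_lt (Nat.mod_lt _ (Nat.lt_of_le_of_lt (Nat.zero_le _) i.isLt))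
      rw [Nat.mul_add, Nat.mul_one]
      omega
    rw [h1, Nat.add_mul_mod_self_left, Nat.mod_eq_of_lt i.isLt]
  right_inv i := by
    apply Fin.ext
    simp only [Nat.mod_add_mod]
    have h1 : (i : ℕ) + (L - r % L) + r = (i : ℕ) + L * (r / L + 1) := by
      have h2 := Nat.mod_add_div r L
      have h3 : r % L ≤ L := le_of_lt (Nat.mod_lt _ (Nat.lt_of_le_of_lt (Nat.zero_le _) i.isLt))
      rw [Nat.mul_add, Nat.mul_one]
      omega
    rw [h1, Nat.add_mul_mod_self_left, Nat.mod_eq_of_lt i.isLt]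

lemma rotate_eq_comp (r : ℕ) (w : Fin L → A) : rotate r w = w ∘ (rotPerm L r) := rfl

lemma card_filter_rotate [DecidableEq A] (r : ℕ) (w : Fin L → A) (a : A) :
    #(filter (fun j => rotate r w j = a) univ) = #(filter (fun j => w j = a) univ) := by
  apply Finset.card_bij' (fun j _ => rotPerm L r j) (fun j _ => (rotPerm L r).symm j)
  · intro j hj
    simp only [mem_filter, mem_univ, true_and] at hj ⊢
    exact hj
  · intro j hj
    simp only [mem_filter, mem_univ, true_and] at hj ⊢
    show rotate r w _ = a
    rw [rotate_eq_comp]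
    simpa using hj
  · intro j _; simp
  · intro j _; simp

end RotAux

namespace RotAux

lemma card_filter_comp {L : ℕ} {A : Type*} [DecidableEq A] (g : Equiv.Perm (Fin L))
    (f : Fin L → A) (a : A) :
    #(filter (fun j => f (g j) = a) univ) = #(filter (fun j => f j = a) univ) := by
  apply Finset.card_bij' (fun j _ => g j) (fun j _ => g.symm j)
  · intro j hj; simp only [mem_filter, mem_univ, true_and] at hj ⊢; exact hj
  · intro j hj; simp only [mem_filter, mem_univ, true_and] at hj ⊢; simpa using hj
  · intro j _; simp
  · intro j _; simp

/-- fiber of `Sigma.fst` -/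
def sigmaFstFiber {k : ℕ} (c : Fin k → ℕ) (i : Fin k) :
    {s : Σ i' : Fin k, Fin (c i') // s.1 = i} ≃ Fin (c i) where
  toFun s := Fin.cast (congrArg c s.2) s.1.2
  invFun x := ⟨⟨i, x⟩, rfl⟩
  left_inv := by rintro ⟨⟨i', x⟩, rfl⟩; rfl
  right_inv x := rfl

theorem card_balanced {k : ℕ} (L : ℕ) (c : Fin k → ℕ) (h : ∑ i, c i = L) :
    Nat.card {w : Fin L → Fin k // ∀ i, #(filter (fun j => w j = i) univ) = c i}
      * ∏ i, (c i).factorial = L.factorial := by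
  classical
  have hcard : Fintype.card (Σ i : Fin k, Fin (c i)) = L := by
    simp [Fintype.card_sigma, h]
  let e0 : (Σ i : Fin k, Fin (c i)) ≃ Fin L := Fintype.equivFinOfCardEq hcard
  set w0 : Fin L → Fin k := fun j => (e0.symm j).1 with hw0def
  have fibw0 : ∀ i, Fintype.card {j : Fin L // w0 j = i} = c i := by
    intro i
    have e1 : {j : Fin L // w0 j = i} ≃ {s : Σ i' : Fin k, Fin (c i') // s.1 = i} :=
      e0.symm.subtypeEquiv (fun j => Iff.rfl)
    rw [Fintype.card_congr (e1.trans (sigmaFstFiber c i)), Fintype.card_fin]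
  have hw0 : ∀ i, #(filter (fun j => w0 j = i) univ) = c i := by
    intro i; rw [← Fintype.card_subtype]; exact fibw0 i
  -- transitivity
  have htrans : ∀ w : Fin L → Fin k, (∀ i, #(filter (fun j => w j = i) univ) = c i) →
      ∃ g : Equiv.Perm (Fin L), w0 ∘ g = w := by
    intro w hw
    have hfib : ∀ i, Fintype.card {j // w j = i} = Fintype.card {j // w0 j = i} := by
      intro i
      rw [Fintype.card_subtype, Fintype.card_subtype, hw i, hw0 i]
    refine ⟨Equiv.ofFiberEquiv (f := w) (g := w0) (fun i => Fintype.equivOfCardEq (hfib i)),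
      funext fun j => ?_⟩
    exact Equiv.ofFiberEquiv_map _ j
  -- the counting map
  set B := {w : Fin L → Fin k // ∀ i, #(filter (fun j => w j = i) univ) = c i} with hBdef
  let F : Equiv.Perm (Fin L) → B := fun g =>
    ⟨w0 ∘ g, fun i => by rw [show w0 ∘ g = fun j => w0 (g j) from rfl]; rw [card_filter_comp g w0 i]; exact hw0 i⟩
  have hfibF : ∀ w : B, Fintype.card {g // F g = w} = ∏ i, (c i).factorial := by
    intro w
    obtain ⟨g0, hg0⟩ := htrans w.1 w.2
    have e2 : {g : Equiv.Perm (Fin L) // w0 ∘ g = w0} ≃ {g // F g = w} := by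
      refine ⟨fun h => ⟨g0.trans h.1, ?_⟩, fun g => ⟨g0.symm.trans g.1, ?_⟩, ?_, ?_⟩
      · have : w0 ∘ (g0.trans h.1) = w.1 := by
          funext x
          have := congrFun h.2 (g0 x)
          simp only [Function.comp] at this ⊢
          simp [Equiv.trans_apply, this, ← congrFun hg0 x]
        exact Subtype.ext this
      · have hg := congrArg Subtype.val g.2
        simp only [F] at hg
        funext x
        have := congrFun hg (g0.symm x)
        simp only [Function.comp, Equiv.trans_apply] at this ⊢
        rw [this, ← congrFun hg0 (g0.symm x)]
        simp
      · intro h; apply Subtype.ext; ext x; simp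
      · intro g; apply Subtype.ext; ext x; simp
    rw [← Fintype.card_congr e2, DomMulAct.stabilizer_card w0]
    exact prod_congr rfl fun i _ => by rw [fibw0]
  have main : Fintype.card (Equiv.Perm (Fin L)) = Fintype.card B * ∏ i, (c i).factorial := by
    rw [← Fintype.card_congr (Equiv.sigmaFiberEquiv F), Fintype.card_sigma]
    rw [Finset.sum_congr rfl (fun w _ => hfibF w), Finset.sum_const, Finset.card_univ,
      smul_eq_mul]
  rw [Nat.card_eq_fintype_card, ← main, Fintype.card_perm, Fintype.card_fin]

end RotAux

namespace RotAux

variable {L d : ℕ} {A : Type*}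

lemma fix_iff_gcd (r : ℕ) (w : Fin L → A) :
    rotate r w = w ↔ rotate (Nat.gcd r L) w = w := by
  constructor
  · intro h; exact fix_gcd r L h (rotate_self w)
  · intro h
    obtain ⟨t, ht⟩ := Nat.gcd_dvd_left r L
    rw [ht]; exact fix_mul h t

lemma rotate_inv (r : ℕ) (w : Fin L → A) : rotate (L - r % L) (rotate r w) = w := by
  rcases Nat.eq_zero_or_pos L with rfl | hL
  · funext i; exact absurd i.isLt (by omega)
  · rw [rotate_rotate, rotate_mod]
    have h1 : (L - r % L + r) = L * (r / L + 1) := by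
      have h2 := Nat.mod_add_div r L
      have h3 : r % L < L := Nat.mod_lt _ hL
      rw [Nat.mul_add, Nat.mul_one]
      omega
    rw [h1, Nat.mul_mod_right, rotate_zero]

/-- `Fin L ≃ Fin d × Fin (L / d)` by `j ↦ (j % d, j / d)`. -/
def modEquiv (hd0 : 0 < d) (hdL : d ∣ L) : Fin L ≃ Fin d × Fin (L / d) where
  toFun j := (⟨(j : ℕ) % d, Nat.mod_lt _ hd0⟩, ⟨(j : ℕ) / d, Nat.div_lt_div_of_lt_of_dvd hdL j.isLt⟩)
  invFun p := ⟨(p.1 : ℕ) + d * (p.2 : ℕ), by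
    have h1 : (p.1 : ℕ) + d * (p.2 : ℕ) < d * ((p.2 : ℕ) + 1) := by
      rw [Nat.mul_succ]; have := p.1.isLt; omega
    have h2 : d * ((p.2 : ℕ) + 1) ≤ d * (L / d) := Nat.mul_le_mul_left _ p.2.isLt
    have h3 : d * (L / d) = L := Nat.mul_div_cancel' hdL
    omega⟩
  left_inv j := by apply Fin.ext; simp [Nat.mod_add_div]
  right_inv p := by
    refine Prod.ext (Fin.ext ?_) (Fin.ext ?_)
    · show ((p.1 : ℕ) + d * (p.2 : ℕ)) % d = p.1
      rw [Nat.add_mul_mod_self_left, Nat.mod_eq_of_lt p.1.isLt]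
    · show ((p.1 : ℕ) + d * (p.2 : ℕ)) / d = p.2
      rw [Nat.add_mul_div_left _ _ hd0, Nat.div_eq_of_lt p.1.isLt, Nat.zero_add]

lemma fixed_apply (hd0 : 0 < d) (hdL : d ∣ L) {w : Fin L → A} (hw : rotate d w = w)
    (j : Fin L) :
    w j = w ⟨(j : ℕ) % d, lt_of_lt_of_le (Nat.mod_lt _ hd0)
      (Nat.le_of_dvd (lt_of_le_of_lt (Nat.zero_le _) j.isLt) hdL)⟩ := by
  have h := fix_mul hw ((j : ℕ) / d)
  have h2 := congrFun h ⟨(j : ℕ) % d, lt_of_lt_of_le (Nat.mod_lt _ hd0)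
      (Nat.le_of_dvd (lt_of_le_of_lt (Nat.zero_le _) j.isLt) hdL)⟩
  simp only [rotate] at h2
  have h3 : ((j : ℕ) % d + d * ((j : ℕ) / d)) % L = (j : ℕ) := by
    rw [Nat.mod_add_div, Nat.mod_eq_of_lt j.isLt]
  calc w j = w ⟨((j : ℕ) % d + d * ((j : ℕ) / d)) % L,
        Nat.mod_lt _ (lt_of_le_of_lt (Nat.zero_le _) j.isLt)⟩ := by
        congr 1; exact (Fin.ext h3).symm
    _ = _ := h2

/-- Words fixed by rotation by `d` are equivalent to words of length `d`. -/
def fixedRotateEquiv (hd0 : 0 < d) (hdL : d ∣ L) (hL0 : 0 < L) :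
    {w : Fin L → A // rotate d w = w} ≃ (Fin d → A) where
  toFun w t := w.1 ⟨(t : ℕ), lt_of_lt_of_le t.isLt (Nat.le_of_dvd hL0 hdL)⟩
  invFun u := ⟨fun j => u ⟨(j : ℕ) % d, Nat.mod_lt _ hd0⟩, by
    funext j
    show u _ = u _
    congr 1
    apply Fin.ext
    show (((j : ℕ) + d) % L) % d = (j : ℕ) % d
    rw [Nat.mod_mod_of_dvd _ hdL, Nat.add_mod_right]⟩
  left_inv w := by
    apply Subtype.ext
    funext j
    exact (fixed_apply hd0 hdL w.2 j).symm
  right_inv u := by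
    funext t
    show u _ = u t
    congr 1
    apply Fin.ext
    exact Nat.mod_eq_of_lt t.isLt

/-- pull a subtype on the first component out of a product. -/
def prodSubtypeFst {a b : Type*} (q : a → Prop) : {p : a × b // q p.1} ≃ {x : a // q x} × b where
  toFun p := (⟨p.1.1, p.2⟩, p.1.2)
  invFun x := ⟨(x.1.1, x.2), x.1.2⟩
  left_inv p := rfl
  right_inv x := rfl

lemma card_filter_extend {k : ℕ} (hd0 : 0 < d) (hdL : d ∣ L) (u : Fin d → Fin k) (i : Fin k) :
    #(filter (fun j : Fin L => u ⟨(j : ℕ) % d, Nat.mod_lt _ hd0⟩ = i) univ)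
      = (L / d) * #(filter (fun t => u t = i) univ) := by
  classical
  rw [← Fintype.card_subtype, ← Fintype.card_subtype]
  have e1 : {j : Fin L // u ⟨(j : ℕ) % d, Nat.mod_lt _ hd0⟩ = i}
      ≃ {p : Fin d × Fin (L / d) // u p.1 = i} :=
    (modEquiv hd0 hdL).subtypeEquiv (fun j => Iff.rfl)
  rw [Fintype.card_congr (e1.trans (prodSubtypeFst (fun x => u x = i))),
    Fintype.card_prod, Fintype.card_fin, Nat.mul_comm]

end RotAux

namespace RotAux

theorem card_fixed (k : ℕ) (v : Fin k → ℕ) (hgcd : Finset.univ.gcd v = 1)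
    (V : ℕ) (hV : V = ∑ i, v i) (hV0 : 0 < V) (m : ℕ) (hm : 0 < m)
    (d : ℕ) (hd0 : 0 < d) (hdL : d ∣ V * m) :
    Nat.card {w : {w : Fin (V * m) → Fin k //
        ∀ i, #(filter (fun j => w j = i) univ) = v i * m} // rotate d w.1 = w.1}
      = if V ∣ d then (V * (d / V)).factorial / ∏ i, (v i * (d / V)).factorial else 0 := by
  classical
  have hL0 : 0 < V * m := Nat.mul_pos hV0 hm
  set e := fixedRotateEquiv (A := Fin k) hd0 hdL hL0 with he
  have hw : ∀ (w : {w : Fin (V * m) → Fin k // rotate d w = w}) (i : Fin k),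
      #(filter (fun j => w.1 j = i) univ)
        = (V * m / d) * #(filter (fun t => (e w) t = i) univ) := by
    intro w i
    rw [← card_filter_extend hd0 hdL (e w) i]
    congr 1
    refine Finset.filter_congr (fun j _ => ?_)
    rw [fixed_apply hd0 hdL w.2 j]
    exact Iff.rfl
  have e1 : {w : {w : Fin (V * m) → Fin k //
        ∀ i, #(filter (fun j => w j = i) univ) = v i * m} // rotate d w.1 = w.1}
      ≃ {u : Fin d → Fin k //
          ∀ i, (V * m / d) * #(filter (fun t => u t = i) univ) = v i * m} := by
    refine Equiv.trans (Equiv.subtypeSubtypeEquivSubtypeInter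
      (fun w : Fin (V * m) → Fin k => ∀ i, #(filter (fun j => w j = i) univ) = v i * m)
      (fun w : Fin (V * m) → Fin k => rotate d w = w)) ?_
    refine Equiv.trans (Equiv.subtypeEquivRight (fun w => and_comm)) ?_
    refine Equiv.trans (Equiv.subtypeSubtypeEquivSubtypeInter
      (fun w : Fin (V * m) → Fin k => rotate d w = w)
      (fun w : Fin (V * m) → Fin k => ∀ i, #(filter (fun j => w j = i) univ) = v i * m)).symm ?_
    refine Equiv.subtypeEquiv e (fun w => ?_)
    constructor
    · intro h i; rw [← hw w i]; exact h i
    · intro h i; rw [hw w i]; exact h i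
  rw [Nat.card_congr e1]
  by_cases hVd : V ∣ d
  · rw [if_pos hVd]
    obtain ⟨p, rfl⟩ := hVd
    have hp0 : 0 < p := by
      rcases Nat.eq_zero_or_pos p with rfl | h
      · simp at hd0
      · exact h
    have hpm : p ∣ m := (Nat.mul_dvd_mul_iff_left hV0).mp hdL
    have hquot : V * m / (V * p) = m / p := Nat.mul_div_mul_left _ _ hV0
    have hmp0 : 0 < m / p := Nat.div_pos (Nat.le_of_dvd hm hpm) hp0
    have e2 : {u : Fin (V * p) → Fin k //
          ∀ i, (V * m / (V * p)) * #(filter (fun t => u t = i) univ) = v i * m}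
        ≃ {u : Fin (V * p) → Fin k // ∀ i, #(filter (fun t => u t = i) univ) = v i * p} := by
      refine Equiv.subtypeEquivRight (fun u => ?_)
      constructor
      · intro h i
        have h2 := h i
        rw [hquot] at h2
        have h3 : v i * m = (v i * p) * (m / p) := by
          rw [Nat.mul_assoc, Nat.mul_div_cancel' hpm]
        rw [h3, Nat.mul_comm (m / p)] at h2
        exact Nat.eq_of_mul_eq_mul_right hmp0 h2
      · intro h i
        rw [h i, hquot, Nat.mul_comm, Nat.mul_assoc, Nat.mul_div_cancel' hpm]
    rw [Nat.card_congr e2, Nat.mul_div_cancel_left _ hV0]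
    have hsum : ∑ i, v i * p = V * p := by
      rw [hV, Finset.sum_mul]
    have hmain := card_balanced (V * p) (fun i => v i * p) hsum
    have hpos : 0 < ∏ i, (v i * p).factorial := by positivity
    rw [eq_comm]
    exact Nat.div_eq_of_eq_mul_left hpos hmain.symm
  · rw [if_neg hVd, Nat.card_eq_zero]
    left
    refine ⟨fun u => hVd ?_⟩
    have key : ∀ i, V ∣ d * v i := by
      intro i
      have h := u.2 i
      set f := #(filter (fun t => u.1 t = i) univ) with hf
      have h2 : (V * m / d) * d = V * m := Nat.div_mul_cancel hdL
      have h4 : V * m * f = v i * m * d := by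
        calc V * m * f = ((V * m / d) * d) * f := by rw [h2]
          _ = ((V * m / d) * f) * d := by ring
          _ = v i * m * d := by rw [h]
      have h5 : V * f = v i * d := by
        have h6 : m * (V * f) = m * (v i * d) := by
          rw [show m * (V * f) = V * m * f by ring, h4]; ring
        exact Nat.eq_of_mul_eq_mul_left hm h6
      exact ⟨f, by rw [Nat.mul_comm d (v i)]; exact h5.symm⟩
    have hdvd : V ∣ Finset.univ.gcd (fun i => d * v i) := Finset.dvd_gcd (fun i _ => key i)
    rwa [Finset.gcd_mul_left, hgcd, normalize_eq, Nat.mul_one] at hdvd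

end RotAux

namespace RotAux

/-- Rotation action of `ZMod L` on words satisfying a rotation-invariant predicate. -/
def rotAddAction (L : ℕ) [NeZero L] {A : Type*} (P : (Fin L → A) → Prop)
    (hP : ∀ (r : ℕ) w, P w → P (rotate r w)) : AddAction (ZMod L) {w : Fin L → A // P w} where
  vadd r w := ⟨rotate r.val w.1, hP _ _ w.2⟩
  zero_vadd w := Subtype.ext (by
    show rotate (0 : ZMod L).val w.1 = w.1
    rw [ZMod.val_zero, rotate_zero])
  add_vadd r s w := Subtype.ext (by
    show rotate (r + s).val w.1 = rotate r.val (rotate s.val w.1)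
    rw [rotate_rotate, ZMod.val_add, ← rotate_mod])

theorem comb (k : ℕ) (v : Fin k → ℕ) (hgcd : Finset.univ.gcd v = 1)
    (V : ℕ) (hV : V = ∑ i, v i) (hV0 : 0 < V) (m : ℕ) (hm : 0 < m) :
    (V * m) * Nat.card (Quot (fun w w' : {w : Fin (V * m) → Fin k //
        ∀ i, #(filter (fun j => w j = i) univ) = v i * m} => rotEquiv w.1 w'.1))
      = ∑ q ∈ m.divisorsAntidiagonal,
          Nat.totient q.1 * ((V * q.2).factorial / ∏ i, (v i * q.2).factorial) := by
  classical
  have hL0 : 0 < V * m := Nat.mul_pos hV0 hm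
  haveI : NeZero (V * m) := ⟨hL0.ne'⟩
  letI act := rotAddAction (V * m) (A := Fin k)
    (fun w => ∀ i, #(filter (fun j => w j = i) univ) = v i * m)
    (fun r w hw i => by rw [card_filter_rotate]; exact hw i)
  haveI fB : ∀ a : ZMod (V * m), Fintype (AddAction.fixedBy {w : Fin (V * m) → Fin k //
      ∀ i, #(filter (fun j => w j = i) univ) = v i * m} a) :=
    fun a => Fintype.ofFinite _
  haveI : Fintype (Quotient (AddAction.orbitRel (ZMod (V * m)) {w : Fin (V * m) → Fin k //
      ∀ i, #(filter (fun j => w j = i) univ) = v i * m})) := Fintype.ofFinite _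
  have hb := AddAction.sum_card_fixedBy_eq_card_orbits_mul_card_addGroup
    (ZMod (V * m)) {w : Fin (V * m) → Fin k //
      ∀ i, #(filter (fun j => w j = i) univ) = v i * m}
  -- identify the quotient
  have hrel : (fun w w' : {w : Fin (V * m) → Fin k //
        ∀ i, #(filter (fun j => w j = i) univ) = v i * m} => rotEquiv w.1 w'.1)
      = @Setoid.r _ (AddAction.orbitRel (ZMod (V * m)) {w : Fin (V * m) → Fin k //
        ∀ i, #(filter (fun j => w j = i) univ) = v i * m}) := by
    funext w w'
    apply propext
    constructor
    · rintro ⟨r, hr⟩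
      show w ∈ AddAction.orbit (ZMod (V * m)) w'
      refine ⟨(↑(V * m - r % (V * m)) : ZMod (V * m)), ?_⟩
      apply Subtype.ext
      show rotate (ZMod.val ((↑(V * m - r % (V * m)) : ZMod (V * m)))) w'.1 = w.1
      rw [ZMod.val_natCast, ← rotate_mod, hr, rotate_inv]
    · rintro ⟨g, hg⟩
      refine ⟨V * m - (ZMod.val g) % (V * m), ?_⟩
      have h1 : rotate (ZMod.val g) w'.1 = w.1 := congrArg Subtype.val hg
      rw [← h1, rotate_inv]
  have hq : Nat.card (Quot (fun w w' : {w : Fin (V * m) → Fin k //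
        ∀ i, #(filter (fun j => w j = i) univ) = v i * m} => rotEquiv w.1 w'.1))
      = Fintype.card (Quotient (AddAction.orbitRel (ZMod (V * m)) {w : Fin (V * m) → Fin k //
        ∀ i, #(filter (fun j => w j = i) univ) = v i * m})) := by
    rw [← Nat.card_eq_fintype_card]
    exact congrArg Nat.card (congrArg (@Quot _) hrel)
  -- compute fixed point counts
  have hfix : ∀ a : ZMod (V * m), Fintype.card (AddAction.fixedBy {w : Fin (V * m) → Fin k //
        ∀ i, #(filter (fun j => w j = i) univ) = v i * m} a)
      = (if V ∣ Nat.gcd (ZMod.val a) (V * m) then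
          (V * (Nat.gcd (ZMod.val a) (V * m) / V)).factorial
            / ∏ i, (v i * (Nat.gcd (ZMod.val a) (V * m) / V)).factorial
        else 0) := by
    intro a
    rw [← Nat.card_eq_fintype_card]
    have e : (AddAction.fixedBy {w : Fin (V * m) → Fin k //
          ∀ i, #(filter (fun j => w j = i) univ) = v i * m} a)
        ≃ {w : {w : Fin (V * m) → Fin k //
            ∀ i, #(filter (fun j => w j = i) univ) = v i * m} //
            rotate (Nat.gcd (ZMod.val a) (V * m)) w.1 = w.1} := by
      refine Equiv.subtypeEquivRight (fun w => ?_)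
      rw [AddAction.mem_fixedBy]
      rw [show (a +ᵥ w = w) ↔ (rotate (ZMod.val a) w.1 = w.1) from
        ⟨fun h => congrArg Subtype.val h, fun h => Subtype.ext h⟩]
      exact fix_iff_gcd _ _
    rw [Nat.card_congr e]
    exact card_fixed k v hgcd V hV hV0 m hm _
      (Nat.gcd_pos_of_pos_right _ hL0) (Nat.gcd_dvd_right _ _)
  -- the Burnside sum
  have S1 : ∑ a : ZMod (V * m), Fintype.card (AddAction.fixedBy {w : Fin (V * m) → Fin k //
        ∀ i, #(filter (fun j => w j = i) univ) = v i * m} a)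
      = ∑ r ∈ range (V * m), (if V ∣ Nat.gcd (V * m) r then
          (V * (Nat.gcd (V * m) r / V)).factorial
            / ∏ i, (v i * (Nat.gcd (V * m) r / V)).factorial
        else 0) := by
    rw [Finset.sum_congr rfl (fun a _ => hfix a)]
    refine Finset.sum_nbij' (fun a => ZMod.val a) (fun r => (↑r : ZMod (V * m)))
      (fun a _ => Finset.mem_range.mpr (ZMod.val_lt a)) (fun r _ => Finset.mem_univ _)
      (fun a _ => ZMod.natCast_rightInverse a) ?_ ?_
    · intro r hr
      show ZMod.val ((r : ZMod (V * m))) = r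
      rw [ZMod.val_natCast, Nat.mod_eq_of_lt (Finset.mem_range.mp hr)]
    · intro a _
      show _ = (if V ∣ Nat.gcd (V * m) (ZMod.val a) then
          (V * (Nat.gcd (V * m) (ZMod.val a) / V)).factorial
            / ∏ i, (v i * (Nat.gcd (V * m) (ZMod.val a) / V)).factorial
        else 0)
      rw [Nat.gcd_comm]
  have S3 : ∑ r ∈ range (V * m), (if V ∣ Nat.gcd (V * m) r then
          (V * (Nat.gcd (V * m) r / V)).factorial
            / ∏ i, (v i * (Nat.gcd (V * m) r / V)).factorial
        else 0)
      = ∑ d ∈ (V * m).divisors, Nat.totient ((V * m) / d) * (if V ∣ d then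
          (V * (d / V)).factorial / ∏ i, (v i * (d / V)).factorial else 0) := by
    rw [← Finset.sum_fiberwise_of_maps_to (g := fun r => Nat.gcd (V * m) r)
      (t := (V * m).divisors)
      (fun r _ => Nat.mem_divisors.mpr ⟨Nat.gcd_dvd_left _ _, hL0.ne'⟩)]
    refine Finset.sum_congr rfl (fun d hd => ?_)
    have hdvd : d ∣ V * m := (Nat.mem_divisors.mp hd).1
    rw [Finset.sum_congr rfl (fun r hr => by rw [(Finset.mem_filter.mp hr).2]),
      Finset.sum_const, ← Nat.totient_div_of_dvd hdvd, smul_eq_mul]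
  have S4 : ∑ d ∈ (V * m).divisors, Nat.totient ((V * m) / d) * (if V ∣ d then
          (V * (d / V)).factorial / ∏ i, (v i * (d / V)).factorial else 0)
      = ∑ p ∈ m.divisors, Nat.totient (m / p)
          * ((V * p).factorial / ∏ i, (v i * p).factorial) := by
    rw [Finset.sum_congr rfl (fun d _ => by rw [mul_ite, Nat.mul_zero]),
      ← Finset.sum_filter]
    refine (Finset.sum_nbij' (fun p => V * p) (fun d => d / V) ?_ ?_ ?_ ?_ ?_).symm
    · intro p hp
      rw [Finset.mem_filter, Nat.mem_divisors]
      exact ⟨⟨Nat.mul_dvd_mul_left V (Nat.mem_divisors.mp hp).1, hL0.ne'⟩,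
        Dvd.intro _ rfl⟩
    · intro d hd
      obtain ⟨hd1, hd2⟩ := Finset.mem_filter.mp hd
      obtain ⟨hd3, _⟩ := Nat.mem_divisors.mp hd1
      refine Nat.mem_divisors.mpr ⟨?_, hm.ne'⟩
      obtain ⟨p, rfl⟩ := hd2
      show V * p / V ∣ m
      rw [Nat.mul_div_cancel_left _ hV0]
      exact (Nat.mul_dvd_mul_iff_left hV0).mp hd3
    · intro p _
      show V * p / V = p
      rw [Nat.mul_div_cancel_left _ hV0]
    · intro d hd
      show V * (d / V) = d
      exact Nat.mul_div_cancel' (Finset.mem_filter.mp hd).2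
    · intro p _
      show Nat.totient (m / p) * ((V * p).factorial / ∏ i, (v i * p).factorial)
        = Nat.totient ((V * m) / (V * p)) * ((V * ((V * p) / V)).factorial
            / ∏ i, (v i * ((V * p) / V)).factorial)
      rw [Nat.mul_div_cancel_left _ hV0, Nat.mul_div_mul_left _ _ hV0]
  have S5 : ∑ q ∈ m.divisorsAntidiagonal,
        Nat.totient q.1 * ((V * q.2).factorial / ∏ i, (v i * q.2).factorial)
      = ∑ p ∈ m.divisors, Nat.totient (m / p)
          * ((V * p).factorial / ∏ i, (v i * p).factorial) :=
    Nat.sum_divisorsAntidiagonal'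
      (fun a b => Nat.totient a * ((V * b).factorial / ∏ i, (v i * b).factorial))
  rw [S5, ← S4, ← S3, ← S1, hq, hb, ZMod.card]
  ring

end RotAux

namespace RotAux

lemma mult_bound (k V : ℕ) (v : Fin k → ℕ) (hV : V = ∑ i, v i) (p : ℕ) :
    ((V * p).factorial / ∏ i, (v i * p).factorial) * ∏ i, (v i) ^ (v i * p)
      ≤ V ^ (V * p) := by
  classical
  have hsum : ∑ i, v i * p = V * p := by rw [hV, Finset.sum_mul]
  have hMn : (V * p).factorial / ∏ i, (v i * p).factorial
      = Nat.multinomial univ (fun i => v i * p) := by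
    have hspec := Nat.multinomial_spec univ (fun i => v i * p)
    rw [hsum] at hspec
    exact Nat.div_eq_of_eq_mul_left (by positivity) (by rw [← hspec]; ring)
  rw [hMn]
  have hexp := Finset.sum_pow_eq_sum_piAntidiag (R := ℕ) univ v (V * p)
  have hmem : (fun i => v i * p) ∈ Finset.piAntidiag univ (V * p) := by
    rw [Finset.mem_piAntidiag]
    exact ⟨hsum, fun i _ => mem_univ i⟩
  calc Nat.multinomial univ (fun i => v i * p) * ∏ i, v i ^ (v i * p)
      ≤ ∑ c ∈ Finset.piAntidiag univ (V * p),
          Nat.multinomial univ c * ∏ i, v i ^ c i :=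
        Finset.single_le_sum (f := fun c => Nat.multinomial univ c * ∏ i, v i ^ c i)
          (fun _ _ => Nat.zero_le _) hmem
    _ = (∑ i, v i) ^ (V * p) := by rw [hexp]; simp
    _ = V ^ (V * p) := by rw [← hV]

end RotAux

open RotAux in
/-- Analytic form of `ΘCyc_v ≅ Σ_{n>0} φ(n) Rep_n(Seq_v)`: with `V = Σ i, v i`,
`gcd v = 1`, and `N m` the number of `v`-balanced necklaces of length `V·m`,
for `0 < x < 1` with `x^V · V^V < ∏ i, (v i)^(v i)` all series below converge and
`Σ_{m≥1} (V·m) N_m x^{V·m} = Σ_{n≥1} φ(n) Σ_{p≥1} ((V·p)!/∏ i (v i · p)!) x^{V·n·p}`.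
(The `m = 0` and `n = 0` terms vanish thanks to the factor `V·m` and `Nat.totient 0 = 0`,
and the inner series is indexed by `p + 1` so it runs over `p ≥ 1`.) -/
theorem pointed_v_balanced_cycle_gf
    (k : ℕ) (hk : 1 ≤ k) (v : Fin k → ℕ) (hv : ∀ i, 1 ≤ v i)
    (hgcd : Finset.univ.gcd v = 1)
    (V : ℕ) (hV : V = ∑ i, v i)
    (N : ℕ → ℕ)
    (hN : ∀ m : ℕ, N m =
      Nat.card (Quot (fun w w' : {w : Fin (V * m) → Fin k //
          ∀ i : Fin k, (Finset.univ.filter (fun j => w j = i)).card = v i * m} =>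
        rotEquiv w.1 w'.1)))
    (x : ℝ) (hx0 : 0 < x) (hx1 : x < 1)
    (hx : x ^ V * (V : ℝ) ^ V < ∏ i, (v i : ℝ) ^ (v i)) :
    Summable (fun m : ℕ => (V * m * N m : ℝ) * x ^ (V * m)) ∧
    (∀ n : ℕ, 1 ≤ n →
      Summable (fun p : ℕ =>
        ((Nat.factorial (V * (p + 1)) / ∏ i, Nat.factorial (v i * (p + 1)) : ℕ) : ℝ) *
          x ^ (V * n * (p + 1)))) ∧
    Summable (fun n : ℕ => (Nat.totient n : ℝ) *
      ∑' p : ℕ,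
        ((Nat.factorial (V * (p + 1)) / ∏ i, Nat.factorial (v i * (p + 1)) : ℕ) : ℝ) *
          x ^ (V * n * (p + 1))) ∧
    ∑' m : ℕ, (V * m * N m : ℝ) * x ^ (V * m)
      = ∑' n : ℕ, (Nat.totient n : ℝ) *
          ∑' p : ℕ,
            ((Nat.factorial (V * (p + 1)) / ∏ i, Nat.factorial (v i * (p + 1)) : ℕ) : ℝ) *
              x ^ (V * n * (p + 1)) := by
  classical
  have hV0 : 0 < V := by
    rw [hV]
    exact Finset.sum_pos (fun i _ => hv i) ⟨⟨0, hk⟩, mem_univ _⟩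
  set Mn : ℕ → ℕ := fun p => (V * p).factorial / ∏ i, (v i * p).factorial with hMn
  set P : ℝ := ∏ i, (v i : ℝ) ^ (v i) with hP
  have hP0 : 0 < P := by
    rw [hP]
    exact Finset.prod_pos (fun i _ => pow_pos (by exact_mod_cast hv i) _)
  set q : ℝ := x ^ V * (V : ℝ) ^ V / P with hq
  have hq0 : 0 ≤ q := by positivity
  have hq1 : q < 1 := (div_lt_one hP0).mpr hx
  -- geometric bound on one term
  have bnd : ∀ p : ℕ, (Mn p : ℝ) * x ^ (V * p) ≤ q ^ p := by
    intro p
    have key : (Mn p : ℝ) * ∏ i, (v i : ℝ) ^ (v i * p) ≤ (V : ℝ) ^ (V * p) := by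
      exact_mod_cast mult_bound k V v hV p
    have hPp : P ^ p = ∏ i, (v i : ℝ) ^ (v i * p) := by
      rw [hP, ← Finset.prod_pow]
      exact Finset.prod_congr rfl (fun i _ => by rw [← pow_mul])
    have hqp : q ^ p = x ^ (V * p) * (V : ℝ) ^ (V * p) / P ^ p := by
      rw [hq, div_pow, mul_pow, ← pow_mul, ← pow_mul]
    rw [hqp, le_div_iff₀ (by positivity)]
    calc (Mn p : ℝ) * x ^ (V * p) * P ^ p
        = ((Mn p : ℝ) * ∏ i, (v i : ℝ) ^ (v i * p)) * x ^ (V * p) := by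
          rw [hPp]; ring
      _ ≤ (V : ℝ) ^ (V * p) * x ^ (V * p) := by
          apply mul_le_mul_of_nonneg_right key (by positivity)
      _ = x ^ (V * p) * (V : ℝ) ^ (V * p) := by ring
  -- the double-indexed summand
  set b : ℕ × ℕ → ℝ := fun u => (Nat.totient u.1 : ℝ) *
      ((Mn (u.2 + 1) : ℝ) * x ^ (V * u.1 * (u.2 + 1))) with hb
  have hbnn : ∀ u, 0 ≤ b u := fun u => by positivity
  -- inner summability
  have hgeo : Summable (fun p : ℕ => q ^ (p + 1)) := by
    have := (summable_geometric_of_lt_one hq0 hq1).mul_left q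
    refine this.congr (fun p => ?_)
    rw [pow_succ, mul_comm]
  have hinner' : ∀ n : ℕ, 1 ≤ n → Summable (fun p : ℕ =>
      (Mn (p + 1) : ℝ) * x ^ (V * n * (p + 1))) := by
    intro n hn
    refine Summable.of_nonneg_of_le (fun p => by positivity) (fun p => ?_) hgeo
    calc (Mn (p + 1) : ℝ) * x ^ (V * n * (p + 1))
        ≤ (Mn (p + 1) : ℝ) * x ^ (V * (p + 1)) := by
          apply mul_le_mul_of_nonneg_left _ (by positivity)
          apply pow_le_pow_of_le_one hx0.le hx1.le
          calc V * (p + 1) = V * 1 * (p + 1) := by ring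
            _ ≤ V * n * (p + 1) := by
              apply Nat.mul_le_mul_right
              exact Nat.mul_le_mul_left _ hn
      _ ≤ q ^ (p + 1) := bnd (p + 1)
  have hinner : ∀ n : ℕ, Summable (fun p : ℕ => b (n, p)) := by
    intro n
    rcases Nat.eq_zero_or_pos n with rfl | hn
    · refine summable_zero.congr (fun p => ?_)
      simp only [hb]
      simp
    · refine ((hinner' n hn).mul_left ((Nat.totient n : ℝ))).congr (fun p => ?_)
      simp only [hb]
  -- outer bound
  set C : ℝ := ∑' p : ℕ, q ^ (p + 1) with hC
  have hC0 : 0 ≤ C := tsum_nonneg (fun p => by positivity)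
  have houter : ∀ n : ℕ, (∑' p : ℕ, b (n, p)) ≤ ((n : ℝ) * C) * (x ^ V) ^ (n - 1) := by
    intro n
    rcases Nat.eq_zero_or_pos n with rfl | hn
    · have h0 : (∑' p : ℕ, b (0, p)) = ∑' _ : ℕ, (0 : ℝ) :=
        tsum_congr (fun p => by simp only [hb]; simp)
      rw [h0, tsum_zero]
      simp
    · obtain ⟨n', rfl⟩ : ∃ n', n = n' + 1 := ⟨n - 1, by omega⟩
      have hle : ∀ p : ℕ, b (n' + 1, p) ≤ ((n' + 1 : ℕ) : ℝ) * (x ^ V) ^ n' * q ^ (p + 1) := by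
        intro p
        simp only [hb]
        have h1 : (Nat.totient (n' + 1) : ℝ) ≤ ((n' + 1 : ℕ) : ℝ) := by
          exact_mod_cast Nat.totient_le _
        have h2 : (Mn (p + 1) : ℝ) * x ^ (V * (n' + 1) * (p + 1))
            ≤ q ^ (p + 1) * (x ^ V) ^ n' := by
          have hsplit : V * (n' + 1) * (p + 1) = V * (p + 1) + V * (p + 1) * n' := by ring
          rw [hsplit, pow_add, ← mul_assoc]
          have h3 : x ^ (V * (p + 1) * n') ≤ (x ^ V) ^ n' := by
            rw [← pow_mul]
            apply pow_le_pow_of_le_one hx0.le hx1.le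
            have : V * n' ≤ V * (p + 1) * n' := by
              apply Nat.mul_le_mul_right
              exact Nat.le_mul_of_pos_right _ (by omega)
            simpa [mul_comm] using this
          calc (Mn (p + 1) : ℝ) * x ^ (V * (p + 1)) * x ^ (V * (p + 1) * n')
              ≤ q ^ (p + 1) * x ^ (V * (p + 1) * n') := by
                apply mul_le_mul_of_nonneg_right (bnd (p + 1)) (by positivity)
            _ ≤ q ^ (p + 1) * (x ^ V) ^ n' := by
                apply mul_le_mul_of_nonneg_left h3 (by positivity)
        calc (Nat.totient (n' + 1) : ℝ) * ((Mn (p + 1) : ℝ) * x ^ (V * (n' + 1) * (p + 1)))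
            ≤ ((n' + 1 : ℕ) : ℝ) * (q ^ (p + 1) * (x ^ V) ^ n') := by
              apply mul_le_mul h1 h2 (by positivity) (by positivity)
          _ = ((n' + 1 : ℕ) : ℝ) * (x ^ V) ^ n' * q ^ (p + 1) := by ring
      have hmaj : Summable (fun p : ℕ => ((n' + 1 : ℕ) : ℝ) * (x ^ V) ^ n' * q ^ (p + 1)) :=
        hgeo.mul_left _
      calc (∑' p : ℕ, b (n' + 1, p))
          ≤ ∑' p : ℕ, ((n' + 1 : ℕ) : ℝ) * (x ^ V) ^ n' * q ^ (p + 1) :=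
            Summable.tsum_le_tsum hle (hinner _) hmaj
        _ = ((n' + 1 : ℕ) : ℝ) * (x ^ V) ^ n' * C := by
            rw [hC, tsum_mul_left]
        _ = (((n' + 1 : ℕ) : ℝ) * C) * (x ^ V) ^ (n' + 1 - 1) := by
            simp; ring
  -- outer summability
  have hy0 : (0 : ℝ) ≤ x ^ V := by positivity
  have hy1 : x ^ V < 1 := pow_lt_one₀ hx0.le hx1 hV0.ne'
  have hmajsum : Summable (fun n : ℕ => ((n : ℝ) * C) * (x ^ V) ^ (n - 1)) := by
    rw [← summable_nat_add_iff 1]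
    have h := (summable_pow_mul_geometric_of_norm_lt_one 1
      (r := x ^ V) (by rw [Real.norm_eq_abs, abs_of_nonneg hy0]; exact hy1))
    have h2 : Summable (fun n : ℕ => (x ^ V) ^ n) := summable_geometric_of_lt_one hy0 hy1
    refine ((h.add h2).mul_left C).congr (fun n => ?_)
    push_cast [Nat.add_sub_cancel]
    ring
  have houtersum : Summable (fun n : ℕ => ∑' p : ℕ, b (n, p)) := by
    refine Summable.of_nonneg_of_le (fun n => tsum_nonneg (fun p => hbnn _)) houter hmajsum
  -- summability of the double sum
  have hbsum : Summable b :=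
    (summable_prod_of_nonneg hbnn).mpr ⟨hinner, houtersum⟩
  -- group fibers of (n, p) ↦ n * (p + 1)
  have hfiber : ∀ m : ℕ,
      (∑' (u : ↑((fun u : ℕ × ℕ => u.1 * (u.2 + 1)) ⁻¹' {m})), b u)
        = (V * m * N m : ℝ) * x ^ (V * m) := by
    intro m
    rcases Nat.eq_zero_or_pos m with rfl | hm
    · have h0 : (∑' (u : ↑((fun u : ℕ × ℕ => u.1 * (u.2 + 1)) ⁻¹' {(0 : ℕ)})), b u)
          = ∑' (_ : ↑((fun u : ℕ × ℕ => u.1 * (u.2 + 1)) ⁻¹' {(0 : ℕ)})), (0 : ℝ) := by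
        refine tsum_congr (fun u => ?_)
        obtain ⟨⟨n, p⟩, hu⟩ := u
        have h1 : n * (p + 1) = 0 := hu
        have hn : n = 0 := by
          rcases Nat.mul_eq_zero.mp h1 with h | h
          · exact h
          · omega
        simp only [hb]
        simp [hn]
      rw [h0, tsum_zero]
      simp
    · have hTset : ((fun u : ℕ × ℕ => u.1 * (u.2 + 1)) ⁻¹' {m})
          = ↑(m.divisorsAntidiagonal.image (fun u => (u.1, u.2 - 1))) := by
        ext ⟨n, p⟩
        simp only [Set.mem_preimage, Set.mem_singleton_iff, Finset.coe_image, Set.mem_image,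
          Finset.mem_coe, Nat.mem_divisorsAntidiagonal]
        constructor
        · intro h
          exact ⟨(n, p + 1), ⟨h, hm.ne'⟩, by simp⟩
        · rintro ⟨⟨a, c⟩, ⟨hac, _⟩, heq⟩
          have hc0 : c ≠ 0 := by
            rintro rfl
            rw [Nat.mul_zero] at hac
            omega
          cases heq
          have h2 : c - 1 + 1 = c := by omega
          rw [h2]
          exact hac
      rw [hTset, Finset.tsum_subtype' (m.divisorsAntidiagonal.image (fun u => (u.1, u.2 - 1))) b]
      rw [Finset.sum_image (f := b) ?hinj]
      case hinj =>
        rintro ⟨a, c⟩ ha ⟨a', c'⟩ ha' heq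
        have hc : c ≠ 0 := by
          intro hc
          obtain ⟨h1, h2⟩ := Nat.mem_divisorsAntidiagonal.mp ha
          rw [hc, Nat.mul_zero] at h1
          omega
        have hc' : c' ≠ 0 := by
          intro hc
          obtain ⟨h1, h2⟩ := Nat.mem_divisorsAntidiagonal.mp ha'
          rw [hc, Nat.mul_zero] at h1
          omega
        obtain ⟨e1, e2⟩ := Prod.mk.injEq .. ▸ heq
        exact Prod.ext e1 (by omega)
      have hterm : ∀ u ∈ m.divisorsAntidiagonal,
          b (u.1, u.2 - 1) = ((Nat.totient u.1 * Mn u.2 : ℕ) : ℝ) * x ^ (V * m) := by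
        intro u hu
        obtain ⟨hu1, _⟩ := Nat.mem_divisorsAntidiagonal.mp hu
        have hc0 : u.2 ≠ 0 := by
          intro hc
          rw [hc, Nat.mul_zero] at hu1
          omega
        have h2 : u.2 - 1 + 1 = u.2 := by omega
        simp only [hb, h2]
        rw [show V * u.1 * u.2 = V * m from by rw [Nat.mul_assoc, hu1]]
        push_cast
        ring
      rw [Finset.sum_congr rfl hterm, ← Finset.sum_mul, ← Nat.cast_sum]
      have hcomb := comb k v hgcd V hV hV0 m hm
      rw [← hN m] at hcomb
      rw [show ∑ u ∈ m.divisorsAntidiagonal, Nat.totient u.1 * Mn u.2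
          = V * m * N m from by simp only [hMn]; exact hcomb.symm]
      push_cast
      ring
  -- assemble
  have Hsum : HasSum (fun m : ℕ => (V * m * N m : ℝ) * x ^ (V * m)) (∑' u : ℕ × ℕ, b u) := by
    have h := hbsum.hasSum.tsum_fiberwise (fun u : ℕ × ℕ => u.1 * (u.2 + 1))
    have hfe : (fun m : ℕ => (V * m * N m : ℝ) * x ^ (V * m))
        = fun m : ℕ => (∑' (u : ↑((fun u : ℕ × ℕ => u.1 * (u.2 + 1)) ⁻¹' {m})), b u) :=
      funext fun m => (hfiber m).symm
    rw [hfe]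
    exact h
  have hinner'' := hinner'
  simp only [hMn] at hinner''
  refine ⟨Hsum.summable, hinner'', ?_, ?_⟩
  · have h := houtersum.congr (fun n => (tsum_mul_left (a := (Nat.totient n : ℝ))
      (f := fun p => (Mn (p + 1) : ℝ) * x ^ (V * n * (p + 1)))))
    simpa only [hMn] using h
  · have hmain : (∑' m : ℕ, (V * m * N m : ℝ) * x ^ (V * m)) = ∑' u : ℕ × ℕ, b u :=
      Hsum.tsum_eq
    rw [hmain, Summable.tsum_prod' hbsum hinner]
    refine tsum_congr (fun n => ?_)
    have h := tsum_mul_left (a := (Nat.totient n : ℝ)) (L := SummationFilter.unconditional ℕ)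
      (f := fun p => (Mn (p + 1) : ℝ) * x ^ (V * n * (p + 1)))
    simpa only [hMn] using h
end

section
/- Let c : ℕ → ℝ satisfy c n ≥ 0 for all n, c 0 = 0, and c n > 0 for at least one n. Let x > 0 be such that the series Σ_{n≥1} n · c n · x^n is summable, and set C(x) = Σ_{n≥1} c n · x^n and C•(y) = Σ_{n≥1} n · c n · y^n. Then the function f_x(u) = C•(x·u) / (u · C(x)) is a probability density on [0,1]: f_x(u) ≥ 0 for all u ∈ (0,1], and ∫_{u=0}^{1} C•(x·u)/(u · C(x)) du = 1. -/
open MeasureTheory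


/-- For a generating function `C(x) = Σ c_n x^n` with nonnegative coefficients, `c 0 = 0`
and some positive coefficient, and `x > 0` in the convergence disc of the pointed series
`C•(y) = Σ n c_n y^n`, the function `u ↦ C•(x·u)/(u·C(x))` is a probability density
on `[0,1]`. -/
theorem pointed_density
    (c : ℕ → ℝ) (hc : ∀ n, 0 ≤ c n) (hc0 : c 0 = 0) (hpos : ∃ n, 0 < c n)
    (x : ℝ) (hx : 0 < x)
    (hsum : Summable (fun n : ℕ => (n : ℝ) * c n * x ^ n)) :
    (∀ u ∈ Set.Ioc (0 : ℝ) 1,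
      0 ≤ (∑' n : ℕ, (n : ℝ) * c n * (x * u) ^ n) / (u * ∑' n : ℕ, c n * x ^ n)) ∧
    ∫ u in (0 : ℝ)..1,
        (∑' n : ℕ, (n : ℝ) * c n * (x * u) ^ n) / (u * ∑' n : ℕ, c n * x ^ n) = 1 := by
  have hsc : Summable (fun n : ℕ => c n * x ^ n) := by
    apply hsum.of_nonneg_of_le
    · intro n; exact mul_nonneg (hc n) (pow_nonneg hx.le n)
    · intro n
      rcases Nat.eq_zero_or_pos n with h | h
      · subst h; simp [hc0]
      · have h1 : (1 : ℝ) ≤ (n : ℝ) := by exact_mod_cast h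
        calc c n * x ^ n = 1 * (c n * x ^ n) := by ring
          _ ≤ (n : ℝ) * (c n * x ^ n) :=
            mul_le_mul_of_nonneg_right h1 (mul_nonneg (hc n) (pow_nonneg hx.le n))
          _ = (n : ℝ) * c n * x ^ n := by ring
  set A : ℝ := ∑' n : ℕ, c n * x ^ n with hA
  have hApos : 0 < A := by
    obtain ⟨n, hn⟩ := hpos
    have hle : c n * x ^ n ≤ A := by
      apply Summable.le_tsum hsc
      intro j _; exact mul_nonneg (hc j) (pow_nonneg hx.le j)
    have : 0 < c n * x ^ n := mul_pos hn (pow_pos hx n)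
    linarith
  constructor
  · intro u hu
    apply div_nonneg
    · apply tsum_nonneg
      intro n
      have hxu : (0:ℝ) < x * u := mul_pos hx hu.1
      exact mul_nonneg (mul_nonneg (Nat.cast_nonneg n) (hc n)) (pow_nonneg hxu.le n)
    · exact le_of_lt (mul_pos hu.1 hApos)
  · set F : ℕ → ℝ → ℝ := fun n u => (n : ℝ) * c n * x ^ n * u ^ (n - 1) with hF
    have hFcont : ∀ n, Continuous (F n) := fun n => by fun_prop
    have hFint : ∀ n : ℕ, ∫ u in Set.Ioc (0:ℝ) 1, F n u = c n * x ^ n := by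
      intro n
      rcases Nat.eq_zero_or_pos n with h | h
      · subst h; simp [hF, hc0]
      · rw [← intervalIntegral.integral_of_le zero_le_one]
        simp only [hF]
        rw [intervalIntegral.integral_const_mul, integral_pow]
        have hn1 : n - 1 + 1 = n := Nat.succ_pred_eq_of_pos h
        rw [hn1, one_pow, zero_pow h.ne']
        have hn0 : (n : ℝ) ≠ 0 := Nat.cast_ne_zero.mpr h.ne'
        field_simp
        rw [Nat.cast_sub h, Nat.cast_one]; ring
    have hInt : ∀ n, IntegrableOn (F n) (Set.Ioc (0:ℝ) 1) := fun n =>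
      (hFcont n).integrableOn_Ioc
    have hnorm : ∀ n : ℕ, ∫ u in Set.Ioc (0:ℝ) 1, ‖F n u‖ = c n * x ^ n := by
      intro n
      rw [← hFint n]
      apply setIntegral_congr_fun measurableSet_Ioc
      intro u hu
      have : 0 ≤ F n u :=
        mul_nonneg (mul_nonneg (mul_nonneg (Nat.cast_nonneg n) (hc n))
          (pow_nonneg hx.le n)) (pow_nonneg hu.1.le _)
      exact Real.norm_of_nonneg this
    have hsumnorm : Summable (fun n : ℕ => ∫ u in Set.Ioc (0:ℝ) 1, ‖F n u‖) := by
      simpa only [hnorm] using hsc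
    have key : ∫ u in Set.Ioc (0:ℝ) 1, ∑' n : ℕ, F n u
        = ∑' n : ℕ, ∫ u in Set.Ioc (0:ℝ) 1, F n u :=
      (integral_tsum_of_summable_integral_norm hInt hsumnorm).symm
    rw [intervalIntegral.integral_of_le zero_le_one]
    have hcongr : ∀ u ∈ Set.Ioc (0:ℝ) 1,
        (∑' n : ℕ, (n : ℝ) * c n * (x * u) ^ n) / (u * A) = (∑' n : ℕ, F n u) / A := by
      intro u hu
      have h1 : ∑' n : ℕ, (n : ℝ) * c n * (x * u) ^ n = u * ∑' n : ℕ, F n u := by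
        rw [← tsum_mul_left]
        apply tsum_congr
        intro n
        rcases Nat.eq_zero_or_pos n with h | h
        · subst h; simp [hF]
        · have hn1 : n - 1 + 1 = n := Nat.succ_pred_eq_of_pos h
          have hpow : u ^ n = u ^ (n - 1) * u := by
            conv_lhs => rw [← hn1]
            rw [pow_succ]
          simp only [hF]
          rw [mul_pow, hpow]
          ring
      rw [h1, mul_div_mul_left _ _ (ne_of_gt hu.1)]
    rw [setIntegral_congr_fun measurableSet_Ioc hcongr]
    rw [integral_div, key]
    have : ∑' n : ℕ, ∫ u in Set.Ioc (0:ℝ) 1, F n u = A := by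
      rw [hA]; exact tsum_congr hFint
    rw [this, div_self hApos.ne']
end

section
/- Let c : ℕ → ℝ satisfy c n ≥ 0 for all n, with c n > 0 for at least one n ≥ 1. Let x > 0 be such that Σ_{n≥1} n · c n · x^n is summable; set C(x) = Σ_{n≥0} c n · x^n and C•(y) = Σ_{n≥1} n · c n · y^n. Then for every N ≥ 1, (1 − c 0 / C(x)) · ∫_{u=0}^{1} ( C•(x·u) / (u · (C(x) − c 0)) ) · ( N · c N · (u·x)^N / C•(x·u) ) du = c N · x^N / C(x). (Hence first drawing u according to the density C•(x·u)/(u·(C(x) − c 0)), returning a uniform size-0 object with probability c 0/C(x), and otherwise running a Boltzmann sampler for the pointed class ΘC at parameter u·x and forgetting the point, yields a valid Boltzmann sampler for C at parameter x.) -/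
set_option maxHeartbeats 1000000


/-- Correctness of the Boltzmann sampler for `C` obtained from a Boltzmann sampler for the
pointed class `ΘC`: drawing `u` with density `C•(x·u)/(u·(C(x) − c 0))`, returning a size-0
object with probability `c 0 / C(x)`, and otherwise sampling `ΘC` at parameter `u·x` and
forgetting the point, outputs size `N` with the Boltzmann probability `c_N x^N / C(x)`. -/
theorem pointed_to_plain_boltzmann
    (c : ℕ → ℝ) (hc : ∀ n, 0 ≤ c n) (hpos : ∃ n, 1 ≤ n ∧ 0 < c n)
    (x : ℝ) (hx : 0 < x)
    (hsum : Summable (fun n : ℕ => (n : ℝ) * c n * x ^ n))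
    (N : ℕ) (hN : 1 ≤ N) :
    (1 - c 0 / ∑' n : ℕ, c n * x ^ n) *
        ∫ u in (0 : ℝ)..1,
          ((∑' n : ℕ, (n : ℝ) * c n * (x * u) ^ n) /
              (u * ((∑' n : ℕ, c n * x ^ n) - c 0))) *
            ((N : ℝ) * c N * (u * x) ^ N / ∑' n : ℕ, (n : ℝ) * c n * (x * u) ^ n)
      = c N * x ^ N / ∑' n : ℕ, c n * x ^ n := by
  obtain ⟨n0, hn0, hcn0⟩ := hpos
  obtain ⟨M, rfl⟩ : ∃ M, N = M + 1 := ⟨N - 1, by omega⟩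
  set N := M + 1
  -- summability of the plain series
  have hsum' : Summable (fun n : ℕ => c n * x ^ n) := by
    rw [← summable_nat_add_iff 1]
    refine Summable.of_nonneg_of_le
      (fun n => mul_nonneg (hc _) (pow_pos hx _).le) (fun n => ?_)
      ((summable_nat_add_iff 1).2 hsum)
    have h1 : (1 : ℝ) ≤ ((n + 1 : ℕ) : ℝ) := by
      exact_mod_cast Nat.one_le_iff_ne_zero.2 (Nat.succ_ne_zero n)
    nlinarith [mul_nonneg (hc (n + 1)) (pow_pos hx (n + 1)).le]
  set C := ∑' n : ℕ, c n * x ^ n with hC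
  have hCpos : 0 < C := Summable.tsum_pos hsum' (fun n => mul_nonneg (hc _) (pow_pos hx _).le) n0 (mul_pos hcn0 (pow_pos hx _))
  have hDpos : 0 < C - c 0 := by
    have h0 : C = c 0 * x ^ 0 + ∑' n : ℕ, c (n + 1) * x ^ (n + 1) := Summable.tsum_eq_zero_add hsum'
    have hshift : Summable (fun n : ℕ => c (n + 1) * x ^ (n + 1)) :=
      (summable_nat_add_iff 1).2 hsum'
    have hpos' : 0 < ∑' n : ℕ, c (n + 1) * x ^ (n + 1) := by
      refine Summable.tsum_pos hshift (fun n => mul_nonneg (hc _) (pow_pos hx _).le) (n0 - 1) ?_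
      have h : n0 - 1 + 1 = n0 := by omega
      rw [h]
      exact mul_pos hcn0 (pow_pos hx _)
    simp at h0
    linarith
  -- simplify the integrand on (0,1]
  have hint : (∫ u in (0 : ℝ)..1,
          ((∑' n : ℕ, (n : ℝ) * c n * (x * u) ^ n) /
              (u * (C - c 0))) *
            ((N : ℝ) * c N * (u * x) ^ N / ∑' n : ℕ, (n : ℝ) * c n * (x * u) ^ n))
      = ∫ u in (0 : ℝ)..1, ((N : ℝ) * c N * x ^ N / (C - c 0)) * u ^ M := by
    rw [intervalIntegral.integral_of_le zero_le_one,
      intervalIntegral.integral_of_le zero_le_one]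
    refine MeasureTheory.setIntegral_congr_fun measurableSet_Ioc (fun u hu => ?_)
    obtain ⟨hu0, hu1⟩ := hu
    have hxu : 0 < x * u := mul_pos hx hu0
    have hTsum : Summable (fun n : ℕ => (n : ℝ) * c n * (x * u) ^ n) := by
      refine Summable.of_nonneg_of_le
        (fun n => mul_nonneg (mul_nonneg (Nat.cast_nonneg n) (hc _)) (pow_pos hxu _).le)
        (fun n => ?_) hsum
      have hle : (x * u) ^ n ≤ x ^ n := by
        refine pow_le_pow_left₀ hxu.le ?_ n
        nlinarith
      have hn : (0 : ℝ) ≤ (n : ℝ) * c n := mul_nonneg (Nat.cast_nonneg n) (hc n)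
      nlinarith
    have hT : 0 < ∑' n : ℕ, (n : ℝ) * c n * (x * u) ^ n := by
      refine Summable.tsum_pos hTsum
        (fun n => mul_nonneg (mul_nonneg (Nat.cast_nonneg n) (hc _)) (pow_pos hxu _).le) n0 ?_
      have h0 : (0 : ℝ) < (n0 : ℝ) := by exact_mod_cast hn0
      exact mul_pos (mul_pos h0 hcn0) (pow_pos hxu _)
    have h2 : (u * x) ^ N = u ^ M * u * x ^ N := by
      rw [mul_pow, pow_succ]
    field_simp [h2]
    ring

  rw [hint, intervalIntegral.integral_const_mul, integral_pow]
  have hNne : ((N : ℝ)) ≠ 0 := by positivity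
  have hMcast : ((M : ℝ) + 1) = (N : ℝ) := by simp only [N]; push_cast; ring
  simp only [one_pow, zero_pow (Nat.succ_ne_zero M)]
  rw [hMcast]
  field_simp
  ring
end
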